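/- arXiv:1106.6024 — 6 statements merged into one kernel-verified Lean document; each statement's English description precedes it below -/
import Mathlib

section
/- For any reference vector λ* ∈ ℝ^N and any ε > 0, AdaBoost achieves loss at most L(λ*) + ε in at most 13·‖λ*‖₁⁶·ε⁻⁵ rounds; that is, for every integer t ≥ 13·‖λ*‖₁⁶·ε⁻⁵ one has L(λ^t) ≤ L(λ*) + ε. -/
/-- The exponential loss `L(λ) = (1/m) ∑ᵢ exp(−(Mλ)ᵢ)`. -/
noncomputable def expLoss {m N : ℕ} (M : Matrix (Fin m) (Fin N) ℝ) (lam : Fin N → ℝ) : ℝ :=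
  (1 / (m : ℝ)) * ∑ i, Real.exp (-(M.mulVec lam i))

/-- AdaBoost's distribution `D(i) ∝ exp(−(Mλ)ᵢ)`. -/
noncomputable def wt {m N : ℕ} (M : Matrix (Fin m) (Fin N) ℝ) (lam : Fin N → ℝ) (i : Fin m) : ℝ :=
  Real.exp (-(M.mulVec lam i)) / ∑ i', Real.exp (-(M.mulVec lam i'))

/-- The ℓ₁-norm on `ℝ^N`. -/
noncomputable def l1 {N : ℕ} (v : Fin N → ℝ) : ℝ := ∑ j, |v j|

/-- `lam`, `j`, `r` describe a run of AdaBoost on feature matrix `M`: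
`lam 0 = 0`, and at each round the coordinate `j t` of maximal absolute correlation is
chosen, `r t` is its correlation, and the step is `α_t = ½ ln((1+r_t)/(1−r_t))`. -/
def IsAdaBoost {m N : ℕ} (M : Matrix (Fin m) (Fin N) ℝ)
    (lam : ℕ → Fin N → ℝ) (j : ℕ → Fin N) (r : ℕ → ℝ) : Prop :=
  lam 0 = 0 ∧
  ∀ t : ℕ,
    (∀ j' : Fin N, |∑ i, wt M (lam t) i * M i j'| ≤ |∑ i, wt M (lam t) i * M i (j t)|) ∧
    r t = ∑ i, wt M (lam t) i * M i (j t) ∧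
    lam (t + 1) = lam t + Pi.single (j t) ((1 / 2) * Real.log ((1 + r t) / (1 - r t)))

private lemma log_ratio_le_aux {s : ℝ} (h0 : 0 ≤ s) (h1 : s < 1) :
    Real.log ((1 + s) / (1 - s)) ≤ 2 * s / (1 - s ^ 2) := by
  have hs1 : 0 < 1 - s := by linarith
  have hs1' : 0 < 1 + s := by linarith
  have hs2 : 0 < 1 - s ^ 2 := by nlinarith [mul_pos hs1 (by linarith : (0:ℝ) < 1 + s)]
  have hx : 0 ≤ 2 * s / (1 - s ^ 2) := by positivity
  have hpos : 0 < (1 + s) / (1 - s) := by positivity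
  rw [Real.log_le_iff_le_exp hpos]
  refine le_trans ?_ (Real.quadratic_le_exp_of_nonneg hx)
  have h2 : (0:ℝ) < (1 - s ^ 2) ^ 2 := by positivity
  have hXeq : 1 + 2 * s / (1 - s ^ 2) + (2 * s / (1 - s ^ 2)) ^ 2 / 2
      = ((1 - s ^ 2) ^ 2 + 2 * s * (1 - s ^ 2) + 2 * s ^ 2) / (1 - s ^ 2) ^ 2 := by
    field_simp
  rw [hXeq, div_le_div_iff₀ hs1 h2]
  linarith [mul_nonneg (pow_nonneg h0 4) hs1.le]

private lemma abs_log_ratio_le_aux {s : ℝ} (h0 : 0 ≤ s) (h1 : s < 1) :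
    |(1 / 2 : ℝ) * Real.log ((1 + s) / (1 - s))| ≤ s / (1 - s ^ 2) := by
  have hs1 : 0 < 1 - s := by linarith
  have hlog0 : 0 ≤ Real.log ((1 + s) / (1 - s)) := by
    apply Real.log_nonneg
    rw [le_div_iff₀ hs1]
    linarith
  rw [abs_of_nonneg (by linarith : (0:ℝ) ≤ (1/2) * Real.log ((1 + s) / (1 - s)))]
  have hlr := log_ratio_le_aux h0 h1
  have h2 : (1/2 : ℝ) * (2 * s / (1 - s ^ 2)) = s / (1 - s ^ 2) := by ring
  linarith [hlr, h2.le, h2.ge]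

private lemma abs_log_ratio_le {r : ℝ} (h1 : -1 < r) (h2 : r < 1) :
    |(1 / 2 : ℝ) * Real.log ((1 + r) / (1 - r))| ≤ |r| / (1 - r ^ 2) := by
  rcases le_or_gt 0 r with h0 | h0
  · rw [abs_of_nonneg h0]
    exact abs_log_ratio_le_aux h0 h2
  · have h0' : 0 ≤ -r := by linarith
    have hne1 : (1 - -r) ≠ 0 := by simp; intro h; nlinarith
    have hne1' : (1 + -r : ℝ) ≠ 0 := by intro h; nlinarith
    have hlogeq : Real.log ((1 + r) / (1 - r)) = - Real.log ((1 + -r) / (1 - -r)) := by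
      rw [← Real.log_inv]
      congr 1
      rw [inv_div]
      ring
    rw [hlogeq]
    have heq : (1/2 : ℝ) * -Real.log ((1 + -r) / (1 - -r))
        = -((1/2) * Real.log ((1 + -r) / (1 - -r))) := by ring
    rw [heq, abs_neg]
    have := abs_log_ratio_le_aux h0' (by linarith : -r < 1)
    have h3 : (-r) ^ 2 = r ^ 2 := by ring
    rw [h3] at this
    rw [abs_of_neg h0]
    exact this

set_option maxHeartbeats 4000000 in
/-- For any reference vector `λ*` and any `ε > 0`, AdaBoost achieves loss at
most `L(λ*) + ε` within `13·‖λ*‖₁⁶·ε⁻⁵` rounds. -/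
theorem adaboost_convergence_to_reference {m N : ℕ} (hm : 0 < m)
    (M : Matrix (Fin m) (Fin N) ℝ) (hM : ∀ i j, |M i j| ≤ 1)
    (lam : ℕ → Fin N → ℝ) (j : ℕ → Fin N) (r : ℕ → ℝ)
    (hAda : IsAdaBoost M lam j r)
    (hdrop : ∀ t : ℕ,
      expLoss M (lam (t + 1)) ≤ expLoss M (lam t) * Real.sqrt (1 - r t ^ 2))
    (lamStar : Fin N → ℝ) (ε : ℝ) (hε : 0 < ε)
    (t : ℕ) (ht : 13 * l1 lamStar ^ 6 / ε ^ 5 ≤ (t : ℝ)) :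
    expLoss M (lam t) ≤ expLoss M lamStar + ε := by
  classical
  obtain ⟨hlam0, hstep⟩ := hAda
  have hmR : (0:ℝ) < m := by exact_mod_cast hm
  have hNe : (Finset.univ : Finset (Fin m)).Nonempty := ⟨⟨0, hm⟩, Finset.mem_univ _⟩
  have hSpos : ∀ v : Fin N → ℝ, 0 < ∑ i, Real.exp (-(M.mulVec v i)) :=
    fun v => Finset.sum_pos (fun i _ => Real.exp_pos _) hNe
  have hLpos : ∀ v : Fin N → ℝ, 0 < expLoss M v := fun v =>
    mul_pos (one_div_pos.mpr hmR) (hSpos v)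
  have hLsum : ∀ v : Fin N → ℝ,
      (∑ i, Real.exp (-(M.mulVec v i))) = m * expLoss M v := by
    intro v
    unfold expLoss
    field_simp
  have hl1nonneg : ∀ v : Fin N → ℝ, 0 ≤ l1 v :=
    fun v => Finset.sum_nonneg fun k _ => abs_nonneg _
  have hL0 : expLoss M (lam 0) = 1 := by
    rw [hlam0]
    unfold expLoss
    simp only [Matrix.mulVec_zero, Pi.zero_apply, neg_zero, Real.exp_zero]
    rw [Finset.sum_const, Finset.card_univ, Fintype.card_fin]
    field_simp
    simp
  have hrdef : ∀ s, r s = ∑ i, wt M (lam s) i * M i (j s) := fun s => (hstep s).2.1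
  have hmax : ∀ s (j' : Fin N), |∑ i, wt M (lam s) i * M i j'| ≤ |r s| := by
    intro s j'
    rw [hrdef s]
    exact (hstep s).1 j'
  have hlamstep : ∀ s, lam (s+1)
      = lam s + Pi.single (j s) ((1/2) * Real.log ((1 + r s) / (1 - r s))) :=
    fun s => (hstep s).2.2
  have hmono : ∀ s, expLoss M (lam (s+1)) ≤ expLoss M (lam s) := by
    intro s
    have h := hdrop s
    have h1 : Real.sqrt (1 - r s ^ 2) ≤ 1 :=
      Real.sqrt_le_one.mpr (by linarith [sq_nonneg (r s)])
    calc expLoss M (lam (s+1)) ≤ expLoss M (lam s) * Real.sqrt (1 - r s ^ 2) := h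
      _ ≤ expLoss M (lam s) * 1 := by
          exact mul_le_mul_of_nonneg_left h1 (hLpos (lam s)).le
      _ = expLoss M (lam s) := mul_one _
  have hanti : Antitone (fun s => expLoss M (lam s)) := antitone_nat_of_succ_le hmono
  have hle1 : ∀ s, expLoss M (lam s) ≤ 1 := by
    intro s
    have := hanti (Nat.zero_le s)
    simpa [hL0] using this
  -- convexity edge bound
  have hconv : ∀ s, expLoss M (lam s) - expLoss M lamStar
      ≤ |r s| * expLoss M (lam s) * l1 (lamStar - lam s) := by
    intro s
    set b : Fin m → ℝ := M.mulVec (lam s) with hb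
    set S : ℝ := ∑ i, Real.exp (-(b i)) with hSdef
    have hSpos' : 0 < S := hSpos (lam s)
    set η : Fin N → ℝ := lamStar - lam s with hη
    have hper : ∀ i, Real.exp (-(b i)) - Real.exp (-(b i)) * (M.mulVec η i)
        ≤ Real.exp (-(M.mulVec lamStar i)) := by
      intro i
      have hab : M.mulVec η i = M.mulVec lamStar i - b i := by
        rw [hη, Matrix.mulVec_sub]
        simp [hb]
      have h := Real.add_one_le_exp (b i - M.mulVec lamStar i)
      have hp : (0:ℝ) < Real.exp (-(b i)) := Real.exp_pos _
      have h2 : Real.exp (-(b i)) * (b i - M.mulVec lamStar i + 1)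
          ≤ Real.exp (-(b i)) * Real.exp (b i - M.mulVec lamStar i) :=
        mul_le_mul_of_nonneg_left h hp.le
      rw [← Real.exp_add] at h2
      have h3 : -(b i) + (b i - M.mulVec lamStar i) = -(M.mulVec lamStar i) := by ring
      rw [h3] at h2
      have h4 : Real.exp (-(b i)) * (b i - M.mulVec lamStar i + 1)
          = Real.exp (-(b i)) - Real.exp (-(b i)) * (M.mulVec lamStar i - b i) := by ring
      rw [hab]
      linarith [h2, h4.symm.le]
    have hsum1 : S - ∑ i, Real.exp (-(b i)) * (M.mulVec η i)
        ≤ ∑ i, Real.exp (-(M.mulVec lamStar i)) := by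
      have h : ∑ i, (Real.exp (-(b i)) - Real.exp (-(b i)) * (M.mulVec η i))
          ≤ ∑ i, Real.exp (-(M.mulVec lamStar i)) :=
        Finset.sum_le_sum (fun i _ => hper i)
      rw [Finset.sum_sub_distrib] at h
      exact h
    -- bound the correlation sum
    have hcsum : ∑ i, Real.exp (-(b i)) * (M.mulVec η i) ≤ S * (|r s| * l1 η) := by
      have hswap : ∑ i, Real.exp (-(b i)) * (M.mulVec η i)
          = ∑ j', η j' * ∑ i, Real.exp (-(b i)) * M i j' := by
        have h1 : ∀ i, Real.exp (-(b i)) * (M.mulVec η i)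
            = ∑ j', Real.exp (-(b i)) * (M i j' * η j') := by
          intro i
          have : M.mulVec η i = ∑ j', M i j' * η j' := rfl
          rw [this, Finset.mul_sum]
        rw [Finset.sum_congr rfl (fun i _ => h1 i), Finset.sum_comm]
        refine Finset.sum_congr rfl (fun j' _ => ?_)
        rw [Finset.mul_sum]
        refine Finset.sum_congr rfl (fun i _ => ?_)
        ring
      rw [hswap]
      have hwtS : ∀ j', ∑ i, Real.exp (-(b i)) * M i j'
          = S * ∑ i, wt M (lam s) i * M i j' := by
        intro j'
        rw [Finset.mul_sum]
        refine Finset.sum_congr rfl (fun i _ => ?_)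
        have hwt : wt M (lam s) i = Real.exp (-(b i)) / S := rfl
        rw [hwt]
        field_simp
      have hterm : ∀ j', η j' * ∑ i, Real.exp (-(b i)) * M i j'
          ≤ |η j'| * (S * |r s|) := by
        intro j'
        rw [hwtS j']
        have habs1 : |η j' * (S * ∑ i, wt M (lam s) i * M i j')|
            = |η j'| * (S * |∑ i, wt M (lam s) i * M i j'|) := by
          rw [abs_mul, abs_mul, abs_of_pos hSpos']
        calc η j' * (S * ∑ i, wt M (lam s) i * M i j')
            ≤ |η j' * (S * ∑ i, wt M (lam s) i * M i j')| := le_abs_self _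
          _ = |η j'| * (S * |∑ i, wt M (lam s) i * M i j'|) := habs1
          _ ≤ |η j'| * (S * |r s|) := by
              apply mul_le_mul_of_nonneg_left _ (abs_nonneg _)
              exact mul_le_mul_of_nonneg_left (hmax s j') hSpos'.le
      calc ∑ j', η j' * ∑ i, Real.exp (-(b i)) * M i j'
          ≤ ∑ j', |η j'| * (S * |r s|) := Finset.sum_le_sum (fun j' _ => hterm j')
        _ = (∑ j', |η j'|) * (S * |r s|) := by rw [← Finset.sum_mul]
        _ = S * (|r s| * l1 η) := by rw [l1]; ring
    have hfin : S - S * (|r s| * l1 η) ≤ m * expLoss M lamStar := by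
      rw [← hLsum lamStar]
      linarith [hsum1, hcsum]
    have hSm : S = m * expLoss M (lam s) := hLsum (lam s)
    rw [hSm] at hfin
    have hgoal : (m:ℝ) * (expLoss M (lam s) - expLoss M lamStar)
        ≤ m * (|r s| * expLoss M (lam s) * l1 η) := by
      have hSm2 : (m:ℝ) * expLoss M (lam s) * (|r s| * l1 η)
          = m * (|r s| * expLoss M (lam s) * l1 η) := by ring
      linarith [hfin, hSm2.le, hSm2.ge]
    have := le_of_mul_le_mul_left (by linarith [hgoal] :
      (m:ℝ) * (expLoss M (lam s) - expLoss M lamStar)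
        ≤ m * (|r s| * expLoss M (lam s) * l1 η)) hmR
    exact this
  -- norm growth
  have hBstep : ∀ s, l1 (lamStar - lam (s+1))
      ≤ l1 (lamStar - lam s) + |(1/2 : ℝ) * Real.log ((1 + r s) / (1 - r s))| := by
    intro s
    have he : lamStar - lam (s+1)
        = (lamStar - lam s) - Pi.single (j s) ((1/2) * Real.log ((1 + r s) / (1 - r s))) := by
      rw [hlamstep s, sub_add_eq_sub_sub]
    rw [he]
    have h2 : l1 (Pi.single (j s) ((1/2 : ℝ) * Real.log ((1 + r s) / (1 - r s))) : Fin N → ℝ)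
        = |(1/2 : ℝ) * Real.log ((1 + r s) / (1 - r s))| := by
      unfold l1
      rw [Finset.sum_eq_single (j s)]
      · rw [Pi.single_eq_same]
      · intro b _ hb
        rw [Pi.single_eq_of_ne hb, abs_zero]
      · intro h
        exact absurd (Finset.mem_univ _) h
    have h1 : l1 ((lamStar - lam s)
          - Pi.single (j s) ((1/2) * Real.log ((1 + r s) / (1 - r s))))
        ≤ l1 (lamStar - lam s)
          + l1 (Pi.single (j s) ((1/2 : ℝ) * Real.log ((1 + r s) / (1 - r s))) : Fin N → ℝ) := by
      unfold l1
      rw [← Finset.sum_add_distrib]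
      refine Finset.sum_le_sum (fun k _ => ?_)
      simp only [Pi.sub_apply]
      exact abs_sub _ _
    linarith [h1, h2.le, h2.ge]
  -- main argument by contradiction
  by_contra hcon
  push_neg at hcon
  -- suboptimality stays above ε
  have hRs : ∀ s, s ≤ t → ε < expLoss M (lam s) - expLoss M lamStar := by
    intro s hs
    have := hanti hs
    simp only at this
    linarith [hcon]
  have hLstarPos : 0 < expLoss M lamStar := hLpos lamStar
  have hB0 : l1 (lamStar - lam 0) = l1 lamStar := by rw [hlam0, sub_zero]
  have hR0B : expLoss M (lam 0) - expLoss M lamStar ≤ l1 lamStar := by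
    have hai : ∀ i, M.mulVec lamStar i ≤ l1 lamStar := by
      intro i
      have h1 : M.mulVec lamStar i = ∑ j', M i j' * lamStar j' := rfl
      rw [h1]
      calc ∑ j', M i j' * lamStar j' ≤ ∑ j', |M i j' * lamStar j'| :=
            Finset.sum_le_sum (fun k _ => le_abs_self _)
        _ ≤ ∑ j', |lamStar j'| := by
            refine Finset.sum_le_sum (fun k _ => ?_)
            rw [abs_mul]
            exact mul_le_of_le_one_left (abs_nonneg _) (hM i k)
        _ = l1 lamStar := rfl
    have hper : ∀ i, 1 - l1 lamStar ≤ Real.exp (-(M.mulVec lamStar i)) := by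
      intro i
      have := Real.add_one_le_exp (-(M.mulVec lamStar i))
      linarith [hai i]
    have hsum : (m:ℝ) * (1 - l1 lamStar) ≤ ∑ i, Real.exp (-(M.mulVec lamStar i)) := by
      calc (m:ℝ) * (1 - l1 lamStar) = ∑ _i : Fin m, (1 - l1 lamStar) := by
            rw [Finset.sum_const, Finset.card_univ, Fintype.card_fin, nsmul_eq_mul]
        _ ≤ _ := Finset.sum_le_sum (fun i _ => hper i)
    rw [hLsum lamStar] at hsum
    have h3 : 1 - l1 lamStar ≤ expLoss M lamStar :=
      le_of_mul_le_mul_left (by linarith) hmR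
    rw [hL0]
    linarith
  have hεB : ε < l1 lamStar := lt_of_lt_of_le (hRs 0 (Nat.zero_le t)) hR0B
  have hBpos : 0 < l1 lamStar := lt_trans hε hεB
  -- abbreviations
  set B : ℝ := l1 lamStar with hBdef
  set R : ℕ → ℝ := fun s => expLoss M (lam s) - expLoss M lamStar with hRdef
  set Bt : ℕ → ℝ := fun s => l1 (lamStar - lam s) with hBtdef
  have hRs' : ∀ s, s ≤ t → ε < R s := by
    intro s hs
    simp only [hRdef]
    exact hRs s hs
  have hR0pos : 0 < R 0 := lt_trans hε (hRs' 0 (Nat.zero_le t))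
  -- per-round core facts
  have hcore : ∀ s, s + 1 ≤ t →
      (Bt (s+1) * R (s+1)^2 ≤ Bt s * R s^2) ∧ R s^2 ≤ 2 * Bt s^2 * (R s - R (s+1)) := by
    intro s hs1
    have hRsε : ε < R s := hRs' s (Nat.le_of_succ_le hs1)
    have hRs1ε : ε < R (s+1) := hRs' (s+1) hs1
    have hRp : 0 < R s := lt_trans hε hRsε
    have hRp1 : 0 < R (s+1) := lt_trans hε hRs1ε
    have hLs : 0 < expLoss M (lam s) := hLpos (lam s)
    have hLs1 : 0 < expLoss M (lam (s+1)) := hLpos (lam (s+1))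
    have hdr := hdrop s
    set σ : ℝ := Real.sqrt (1 - r s ^ 2) with hσdef
    have hσ0 : 0 ≤ σ := Real.sqrt_nonneg _
    have hσpos : 0 < σ := by
      rcases lt_or_ge 0 σ with h | h
      · exact h
      · have hns : expLoss M (lam s) * σ ≤ 0 :=
          mul_nonpos_of_nonneg_of_nonpos hLs.le h
        linarith [hdr, hLs1]
    have hr2 : r s ^ 2 < 1 := by
      have := Real.sqrt_pos.mp hσpos
      linarith
    have habs : |r s| < 1 := (sq_lt_one_iff_abs_lt_one (r s)).mp hr2
    have hσsq : σ ^ 2 = 1 - r s ^ 2 := Real.sq_sqrt (by linarith)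
    have hσ1 : σ ≤ 1 := by linarith [hσsq.le, hσsq.ge, sq_nonneg (r s), sq_nonneg (σ - 1)]
    have hEdge : R s ≤ |r s| * expLoss M (lam s) * Bt s := by
      simp only [hRdef, hBtdef]
      exact hconv s
    have hBtnn : 0 ≤ Bt s := hl1nonneg _
    have hBtpos : 0 < Bt s := by
      rcases lt_or_ge 0 (Bt s) with h | h
      · exact h
      · have hns : |r s| * expLoss M (lam s) * Bt s ≤ 0 :=
          mul_nonpos_of_nonneg_of_nonpos (mul_nonneg (abs_nonneg _) hLs.le) h
        linarith [hEdge, hRsε, hε]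
    have hdpos : 0 < |r s| := by
      rcases lt_or_ge 0 (|r s|) with h | h
      · exact h
      · have h0 : |r s| = 0 := le_antisymm h (abs_nonneg _)
        rw [h0] at hEdge
        simp at hEdge
        linarith [hEdge, hRsε, hε]
    have hRdiff : R s - R (s+1) = expLoss M (lam s) - expLoss M (lam (s+1)) := by
      simp only [hRdef]
      ring
    have hα : |(1/2 : ℝ) * Real.log ((1 + r s) / (1 - r s))| ≤ |r s| / (1 - r s ^ 2) := by
      have h1 := abs_lt.mp habs
      exact abs_log_ratio_le h1.1 h1.2
    set α : ℝ := |(1/2 : ℝ) * Real.log ((1 + r s) / (1 - r s))| with hαdef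
    have hαnn : 0 ≤ α := abs_nonneg _
    have hA1 : α * (1 - r s ^ 2) ≤ |r s| := (le_div_iff₀ (by linarith)).mp hα
    have hA1' : α * σ ^ 2 ≤ |r s| := by rw [hσsq]; exact hA1
    have hρ : R (s+1) ≤ σ * R s := by
      simp only [hRdef]
      have hp : 0 ≤ (1 - σ) * expLoss M lamStar :=
        mul_nonneg (by linarith) hLstarPos.le
      linarith [hdr, hp]
    have hdrop2 : (1 - σ) * expLoss M (lam s) ≤ R s - R (s+1) := by
      rw [hRdiff]
      linarith [hdr]
    have hkey : α * R (s+1)^2 ≤ Bt s * (R s^2 - R (s+1)^2) := by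
      have c11 : R (s+1)^2 ≤ σ^2 * R s^2 := by
        have h := mul_self_le_mul_self hRp1.le hρ
        nlinarith [h]
      have c12 : σ * R (s+1)^2 ≤ σ^2 * (R s * R (s+1)) := by
        have h := mul_le_mul_of_nonneg_left hρ (mul_nonneg hσ0 hRp1.le)
        nlinarith [h]
      have hd2 : |r s|^2 = (1 - σ) * (1 + σ) := by
        rw [sq_abs]
        nlinarith [hσsq]
      have c2 : |r s|^2 * R (s+1)^2 ≤ σ^2 * (1 - σ) * (R s^2 + R s * R (s+1)) := by
        have e1 := mul_le_mul_of_nonneg_left c11 (by linarith : (0:ℝ) ≤ 1 - σ)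
        have e2 := mul_le_mul_of_nonneg_left c12 (by linarith : (0:ℝ) ≤ 1 - σ)
        have hd2' : |r s|^2 * R (s+1)^2 = (1 - σ) * (1 + σ) * R (s+1)^2 := by
          rw [hd2]
        linarith [e1, e2, hd2'.le, hd2'.ge]
      have e4 : (1 - σ) * R s ≤ (|r s| * Bt s) * (R s - R (s+1)) := by
        have e1 : (1 - σ) * R s ≤ (1 - σ) * (|r s| * expLoss M (lam s) * Bt s) :=
          mul_le_mul_of_nonneg_left hEdge (by linarith)
        have e3 : (|r s| * Bt s) * ((1 - σ) * expLoss M (lam s))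
            ≤ (|r s| * Bt s) * (R s - R (s+1)) :=
          mul_le_mul_of_nonneg_left hdrop2 (by positivity)
        have e2 : (1 - σ) * (|r s| * expLoss M (lam s) * Bt s)
            = (|r s| * Bt s) * ((1 - σ) * expLoss M (lam s)) := by ring
        linarith [e1, e3, e2.le, e2.ge]
      have c5 : σ^2 * (1 - σ) * (R s^2 + R s * R (s+1))
          ≤ σ^2 * |r s| * Bt s * ((R s - R (s+1)) * (R s + R (s+1))) := by
        have e5 : (0:ℝ) ≤ σ^2 * (R s + R (s+1)) := by positivity
        calc σ^2 * (1 - σ) * (R s^2 + R s * R (s+1))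
            = (σ^2 * (R s + R (s+1))) * ((1 - σ) * R s) := by ring
          _ ≤ (σ^2 * (R s + R (s+1))) * ((|r s| * Bt s) * (R s - R (s+1))) :=
              mul_le_mul_of_nonneg_left e4 e5
          _ = σ^2 * |r s| * Bt s * ((R s - R (s+1)) * (R s + R (s+1))) := by ring
      have c6 : (α * R (s+1)^2) * (σ^2 * |r s|)
          ≤ (Bt s * (R s^2 - R (s+1)^2)) * (σ^2 * |r s|) := by
        calc (α * R (s+1)^2) * (σ^2 * |r s|)
            = (α * σ^2) * (|r s| * R (s+1)^2) := by ring
          _ ≤ |r s| * (|r s| * R (s+1)^2) :=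
              mul_le_mul_of_nonneg_right hA1' (by positivity)
          _ = |r s|^2 * R (s+1)^2 := by ring
          _ ≤ σ^2 * (1 - σ) * (R s^2 + R s * R (s+1)) := c2
          _ ≤ σ^2 * |r s| * Bt s * ((R s - R (s+1)) * (R s + R (s+1))) := c5
          _ = (Bt s * (R s^2 - R (s+1)^2)) * (σ^2 * |r s|) := by ring
      exact le_of_mul_le_mul_right c6 (by positivity)
    constructor
    · -- potential decreases
      have hb : Bt (s+1) ≤ Bt s + α := by
        simp only [hBtdef, hαdef]
        exact hBstep s
      have hb2 : Bt (s+1) * R (s+1)^2 ≤ (Bt s + α) * R (s+1)^2 :=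
        mul_le_mul_of_nonneg_right hb (sq_nonneg _)
      linarith [hb2, hkey]
    · -- progress
      have hσup : σ ≤ 1 - |r s|^2 / 2 := by
        have h1 : |r s| ^ 2 = r s ^ 2 := sq_abs _
        linarith [hσsq.le, hσsq.ge, h1.le, h1.ge, sq_nonneg (σ - 1)]
      have hdrop3 : expLoss M (lam s) * |r s|^2 / 2 ≤ R s - R (s+1) := by
        have h1 : |r s|^2 / 2 * expLoss M (lam s) ≤ (1 - σ) * expLoss M (lam s) :=
          mul_le_mul_of_nonneg_right (by linarith [hσup]) hLs.le
        linarith [hdrop2, h1]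
      have hd0 : 0 ≤ R s - R (s+1) := by
        have h := hmono s
        rw [hRdiff]
        linarith
      have hsq : R s^2 ≤ |r s|^2 * expLoss M (lam s)^2 * Bt s^2 := by
        have h := mul_self_le_mul_self hRp.le hEdge
        nlinarith [h]
      have hL1 : expLoss M (lam s) ≤ 1 := hle1 s
      have k2 : (expLoss M (lam s) * |r s|^2 / 2) * (2 * expLoss M (lam s) * Bt s^2)
          ≤ (R s - R (s+1)) * (2 * expLoss M (lam s) * Bt s^2) :=
        mul_le_mul_of_nonneg_right hdrop3 (by positivity)
      have k3 : (R s - R (s+1)) * (2 * expLoss M (lam s) * Bt s^2)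
          ≤ (R s - R (s+1)) * (2 * 1 * Bt s^2) := by
        apply mul_le_mul_of_nonneg_left _ hd0
        have h1 : expLoss M (lam s) * Bt s^2 ≤ 1 * Bt s^2 :=
          mul_le_mul_of_nonneg_right hL1 (sq_nonneg _)
        linarith [h1]
      calc R s^2 ≤ |r s|^2 * expLoss M (lam s)^2 * Bt s^2 := hsq
        _ = (expLoss M (lam s) * |r s|^2 / 2) * (2 * expLoss M (lam s) * Bt s^2) := by ring
        _ ≤ (R s - R (s+1)) * (2 * expLoss M (lam s) * Bt s^2) := k2
        _ ≤ (R s - R (s+1)) * (2 * 1 * Bt s^2) := k3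
        _ = 2 * Bt s^2 * (R s - R (s+1)) := by ring
  -- the potential invariant
  have hΦ : ∀ s, s ≤ t → Bt s * R s^2 ≤ B * R 0^2 := by
    intro s
    induction s with
    | zero =>
      intro _
      have : Bt 0 = B := by
        simp only [hBtdef, hBdef]
        exact hB0
      rw [this]
    | succ n ih =>
      intro hn
      exact le_trans (hcore n hn).1 (ih (Nat.le_of_succ_le hn))
  -- per-round drop in terms of B
  have hprog : ∀ s, s + 1 ≤ t → R s^6 ≤ 2 * B^6 * (R s - R (s+1)) := by
    intro s hs
    obtain ⟨_, hc2⟩ := hcore s hs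
    have hRp : 0 < R s := lt_trans hε (hRs' s (Nat.le_of_succ_le hs))
    have hBtnn : 0 ≤ Bt s := hl1nonneg _
    have hΦs := hΦ s (Nat.le_of_succ_le hs)
    have hd0 : 0 ≤ R s - R (s+1) := by
      have h := hmono s
      simp only [hRdef]
      linarith
    have h1 : Bt s^2 * R s^4 ≤ B^2 * R 0^4 := by
      have hnn : 0 ≤ Bt s * R s^2 := mul_nonneg hBtnn (sq_nonneg _)
      have h := mul_self_le_mul_self hnn hΦs
      nlinarith [h]
    have h2 : R 0^4 ≤ B^4 := pow_le_pow_left₀ hR0pos.le hR0B 4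
    have k1 : R s^2 * R s^4 ≤ (2 * Bt s^2 * (R s - R (s+1))) * R s^4 :=
      mul_le_mul_of_nonneg_right hc2 (by positivity)
    have k2 : Bt s^2 * R s^4 * (2 * (R s - R (s+1)))
        ≤ B^2 * R 0^4 * (2 * (R s - R (s+1))) :=
      mul_le_mul_of_nonneg_right h1 (by linarith)
    have k3 : B^2 * R 0^4 * (2 * (R s - R (s+1)))
        ≤ B^2 * B^4 * (2 * (R s - R (s+1))) := by
      have h4 : B^2 * R 0^4 ≤ B^2 * B^4 := mul_le_mul_of_nonneg_left h2 (sq_nonneg B)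
      exact mul_le_mul_of_nonneg_right h4 (by linarith)
    calc R s^6 = R s^2 * R s^4 := by ring
      _ ≤ (2 * Bt s^2 * (R s - R (s+1))) * R s^4 := k1
      _ = Bt s^2 * R s^4 * (2 * (R s - R (s+1))) := by ring
      _ ≤ B^2 * R 0^4 * (2 * (R s - R (s+1))) := k2
      _ ≤ B^2 * B^4 * (2 * (R s - R (s+1))) := k3
      _ = 2 * B^6 * (R s - R (s+1)) := by ring
  -- counting
  have hΨ : ∀ s, s ≤ t → 5 * (s:ℝ) / (2 * B^6) ≤ 1 / (R s^5) := by
    intro s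
    induction s with
    | zero =>
      intro _
      have h1 : 0 < 1 / (R 0^5) := by positivity
      simp only [Nat.cast_zero]
      rw [mul_zero, zero_div]
      linarith
    | succ n ih =>
      intro hn
      have ihn := ih (Nat.le_of_succ_le hn)
      have hp := hprog n hn
      have hRn : 0 < R n := lt_trans hε (hRs' n (Nat.le_of_succ_le hn))
      have hRn1 : 0 < R (n+1) := lt_trans hε (hRs' (n+1) hn)
      have hmon : R (n+1) ≤ R n := by
        have h := hmono n
        simp only [hRdef]
        linarith
      have hB6 : (0:ℝ) < B^6 := by positivity
      have hd0 : 0 ≤ R n - R (n+1) := by linarith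
      have t4 : R (n+1)^4 ≤ R n^4 := pow_le_pow_left₀ hRn1.le hmon 4
      have t3 : R (n+1)^3 ≤ R n^3 := pow_le_pow_left₀ hRn1.le hmon 3
      have t2 : R (n+1)^2 ≤ R n^2 := pow_le_pow_left₀ hRn1.le hmon 2
      have h5 : 5 * R (n+1)^4 * (R n - R (n+1)) ≤ R n^5 - R (n+1)^5 := by
        have w1 : 0 ≤ (R n - R (n+1)) * (R n^4 - R (n+1)^4) :=
          mul_nonneg hd0 (by linarith)
        have w2 : 0 ≤ (R n - R (n+1)) * R (n+1) * (R n^3 - R (n+1)^3) :=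
          mul_nonneg (mul_nonneg hd0 hRn1.le) (by linarith)
        have w3 : 0 ≤ (R n - R (n+1)) * R (n+1)^2 * (R n^2 - R (n+1)^2) :=
          mul_nonneg (mul_nonneg hd0 (sq_nonneg _)) (by linarith)
        have w4 : 0 ≤ (R n - R (n+1)) * R (n+1)^3 * (R n - R (n+1)) :=
          mul_nonneg (mul_nonneg hd0 (pow_nonneg hRn1.le 3)) hd0
        linarith [w1, w2, w3, w4]
      have e1 : 1 / R (n+1)^5 - 1 / R n^5 = (R n^5 - R (n+1)^5) / (R n^5 * R (n+1)^5) := by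
        field_simp
        try exact Or.inl trivial
      have hden : (0:ℝ) < R n^5 * R (n+1)^5 := by positivity
      have e2 : (5 * R (n+1)^4 * (R n - R (n+1))) / (R n^5 * R (n+1)^5)
          ≤ (R n^5 - R (n+1)^5) / (R n^5 * R (n+1)^5) :=
        (div_le_div_iff_of_pos_right hden).mpr h5
      have e3 : (5 * R (n+1)^4 * (R n - R (n+1))) / (R n^5 * R (n+1)^5)
          = 5 * (R n - R (n+1)) / (R n^5 * R (n+1)) := by
        field_simp
      have e4 : 5 * (R n - R (n+1)) / (R n^6) ≤ 5 * (R n - R (n+1)) / (R n^5 * R (n+1)) := by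
        apply div_le_div_of_nonneg_left (by linarith : (0:ℝ) ≤ 5 * (R n - R (n+1)))
          (by positivity)
        have h1 : R n^5 * R (n+1) ≤ R n^5 * R n :=
          mul_le_mul_of_nonneg_left hmon (pow_nonneg hRn.le 5)
        linarith [h1]
      have e5 : R n^6 / (2 * B^6) ≤ R n - R (n+1) := by
        rw [div_le_iff₀ (by positivity)]
        linarith [hp]
      have e6 : 5 * (R n^6 / (2 * B^6)) / (R n^6) ≤ 5 * (R n - R (n+1)) / (R n^6) :=
        (div_le_div_iff_of_pos_right (by positivity)).mpr (by linarith)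
      have e7 : 5 * (R n^6 / (2 * B^6)) / (R n^6) = 5 / (2 * B^6) := by
        field_simp
        try ring
      have key : 1 / R n^5 + 5 / (2 * B^6) ≤ 1 / R (n+1)^5 := by
        linarith [e1, e2, e3.le, e3.ge, e4, e6, e7.le, e7.ge]
      push_cast
      have hsplit : 5 * ((n:ℝ)+1) / (2 * B^6) = 5 * (n:ℝ) / (2 * B^6) + 5 / (2 * B^6) := by
        ring
      rw [hsplit]
      linarith [ihn, key]
  -- final contradiction
  have hfin := hΨ t le_rfl
  have hRt : ε < R t := hRs' t le_rfl
  have h1 : 1 / (R t^5) < 1 / ε^5 := by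
    have hlt : ε^5 < R t^5 := pow_lt_pow_left₀ hRt hε.le (by norm_num)
    exact one_div_lt_one_div_of_lt (by positivity) hlt
  have hB6 : (0:ℝ) < B^6 := by positivity
  have h2 : 5 * (t:ℝ) / (2 * B^6) < 1 / ε^5 := lt_of_le_of_lt hfin h1
  rw [div_lt_div_iff₀ (by positivity) (by positivity : (0:ℝ) < ε^5)] at h2
  rw [div_le_iff₀ (by positivity : (0:ℝ) < ε^5)] at ht
  linarith [hB6, ht, h2]
end

section
/- In each round t of AdaBoost, if S_{t−1} > 0 then the edge satisfies δ_t ≥ R_{t−1}/S_{t−1}. -/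
/-- The logarithmic suboptimality `R(λ) = ln L(λ) − ln L(λ*)` relative to a reference `λ*`. -/
noncomputable def Rlog {m N : ℕ} (M : Matrix (Fin m) (Fin N) ℝ)
    (lamStar lam : Fin N → ℝ) : ℝ :=
  Real.log (expLoss M lam) - Real.log (expLoss M lamStar)

/-- The ℓ₁-distance `S(λ) = inf {‖μ − λ‖₁ : L(μ) ≤ L(λ*)}` from `λ` to the set of
combinations achieving the target loss. -/
noncomputable def Sdist {m N : ℕ} (M : Matrix (Fin m) (Fin N) ℝ)
    (lamStar lam : Fin N → ℝ) : ℝ :=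
  sInf {d : ℝ | ∃ μ : Fin N → ℝ, expLoss M μ ≤ expLoss M lamStar ∧ d = l1 (μ - lam)}

/-- Key convexity (Jensen) estimate: the drop in log-loss from `lamt` to any `μ` is at most
`δ · ‖μ − lamt‖₁`, where `δ` bounds all coordinate correlations. -/
lemma expLoss_log_sub_le {m N : ℕ} (hm : 0 < m) (M : Matrix (Fin m) (Fin N) ℝ)
    (lamt μ : Fin N → ℝ) (δ : ℝ)
    (hδ : ∀ j' : Fin N, |∑ i, wt M lamt i * M i j'| ≤ δ) :
    Real.log (expLoss M lamt) - Real.log (expLoss M μ) ≤ δ * l1 (μ - lamt) := by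
  have : Nonempty (Fin m) := Fin.pos_iff_nonempty.mp hm
  set E := ∑ i', Real.exp (-(M.mulVec lamt i')) with hEdef
  have hE : 0 < E := Finset.sum_pos (fun i _ => Real.exp_pos _) Finset.univ_nonempty
  set F := ∑ i', Real.exp (-(M.mulVec μ i')) with hFdef
  have hF : 0 < F := Finset.sum_pos (fun i _ => Real.exp_pos _) Finset.univ_nonempty
  set D := wt M lamt with hDdef
  have hD0 : ∀ i, 0 ≤ D i := fun i => div_nonneg (Real.exp_pos _).le hE.le
  have hD1 : ∑ i, D i = 1 := by
    simp only [hDdef, wt, ← Finset.sum_div, ← hEdef]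
    exact div_self hE.ne'
  set x : Fin m → ℝ := fun i => M.mulVec lamt i - M.mulVec μ i with hxdef
  have jensen : Real.exp (∑ i, D i * x i) ≤ ∑ i, D i * Real.exp (x i) := by
    simpa [smul_eq_mul] using
      convexOn_exp.map_sum_le (t := Finset.univ) (w := D) (p := x)
        (fun i _ => hD0 i) hD1 (fun i _ => Set.mem_univ _)
  have hsum : ∑ i, D i * Real.exp (x i) = F / E := by
    rw [Finset.sum_div]
    refine Finset.sum_congr rfl fun i _ => ?_
    simp only [hDdef, wt, ← hEdef, hxdef]
    rw [div_mul_eq_mul_div, ← Real.exp_add]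
    ring_nf
  have hlog : Real.log (expLoss M lamt) - Real.log (expLoss M μ) ≤ - ∑ i, D i * x i := by
    have hm' : (0:ℝ) < (m:ℝ) := by exact_mod_cast hm
    have h1 : Real.log (expLoss M lamt) = Real.log (1 / (m:ℝ)) + Real.log E :=
      Real.log_mul (by positivity) hE.ne'
    have h2 : Real.log (expLoss M μ) = Real.log (1 / (m:ℝ)) + Real.log F :=
      Real.log_mul (by positivity) hF.ne'
    have h3 : ∑ i, D i * x i ≤ Real.log (F / E) := by
      rw [← Real.log_exp (∑ i, D i * x i)]
      exact Real.log_le_log (Real.exp_pos _) (hsum ▸ jensen)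
    rw [h1, h2, Real.log_div hF.ne' hE.ne'] at *
    linarith
  refine hlog.trans ?_
  have hterm : ∀ i, D i * x i = ∑ j', (D i * M i j') * (lamt j' - μ j') := by
    intro i
    simp only [hxdef, Matrix.mulVec, dotProduct]
    rw [← Finset.sum_sub_distrib, Finset.mul_sum]
    exact Finset.sum_congr rfl fun j' _ => by ring
  have hswap : - ∑ i, D i * x i = ∑ j', (μ j' - lamt j') * ∑ i, D i * M i j' := by
    simp only [hterm]
    rw [Finset.sum_comm, ← Finset.sum_neg_distrib]
    refine Finset.sum_congr rfl fun j' _ => ?_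
    rw [Finset.mul_sum, ← Finset.sum_neg_distrib]
    exact Finset.sum_congr rfl fun i _ => by ring
  rw [hswap]
  have hbound : ∀ j' : Fin N, (μ j' - lamt j') * ∑ i, D i * M i j' ≤ δ * |μ j' - lamt j'| := by
    intro j'
    calc (μ j' - lamt j') * ∑ i, D i * M i j'
        ≤ |(μ j' - lamt j') * ∑ i, D i * M i j'| := le_abs_self _
      _ = |μ j' - lamt j'| * |∑ i, D i * M i j'| := abs_mul _ _
      _ ≤ |μ j' - lamt j'| * δ := mul_le_mul_of_nonneg_left (hδ j') (abs_nonneg _)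
      _ = δ * |μ j' - lamt j'| := mul_comm _ _
  calc ∑ j', (μ j' - lamt j') * ∑ i, D i * M i j' ≤ ∑ j', δ * |μ j' - lamt j'| :=
        Finset.sum_le_sum fun j' _ => hbound j'
    _ = δ * l1 (μ - lamt) := by rw [l1, Finset.mul_sum]; simp [Pi.sub_apply]

/-- In each round `t` of AdaBoost, if `S_{t−1} > 0` then the edge satisfies
`δ_t ≥ R_{t−1}/S_{t−1}`. (Round `t` is the step from `lam t` to `lam (t+1)`, with edge `|r t|`.) -/
theorem adaboost_edge_ge_R_div_S {m N : ℕ} (hm : 0 < m)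
    (M : Matrix (Fin m) (Fin N) ℝ) (hM : ∀ i j, |M i j| ≤ 1)
    (lam : ℕ → Fin N → ℝ) (j : ℕ → Fin N) (r : ℕ → ℝ)
    (hAda : IsAdaBoost M lam j r)
    (lamStar : Fin N → ℝ) (t : ℕ)
    (hS : 0 < Sdist M lamStar (lam t)) :
    Rlog M lamStar (lam t) / Sdist M lamStar (lam t) ≤ |r t| := by
  have : Nonempty (Fin m) := Fin.pos_iff_nonempty.mp hm
  obtain ⟨h0, hstep⟩ := hAda
  obtain ⟨hmax, hr, -⟩ := hstep t
  have hδ : ∀ j' : Fin N, |∑ i, wt M (lam t) i * M i j'| ≤ |r t| := by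
    intro j'; rw [hr]; exact hmax j'
  set s : Set ℝ :=
    {d : ℝ | ∃ μ : Fin N → ℝ, expLoss M μ ≤ expLoss M lamStar ∧ d = l1 (μ - lam t)} with hsdef
  have hSdef : Sdist M lamStar (lam t) = sInf s := rfl
  have hne : s.Nonempty := by
    by_contra h
    rw [Set.not_nonempty_iff_eq_empty] at h
    rw [hSdef, h, Real.sInf_empty] at hS
    exact lt_irrefl 0 hS
  have hpos : ∀ ν : Fin N → ℝ, 0 < expLoss M ν := by
    intro ν
    have hm' : (0:ℝ) < (m:ℝ) := by exact_mod_cast hm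
    have : 0 < ∑ i, Real.exp (-(M.mulVec ν i)) :=
      Finset.sum_pos (fun i _ => Real.exp_pos _) Finset.univ_nonempty
    rw [expLoss]; positivity
  have hkey : ∀ d ∈ s, Rlog M lamStar (lam t) ≤ |r t| * d := by
    rintro d ⟨μ, hμ, rfl⟩
    have h1 := expLoss_log_sub_le hm M (lam t) μ (|r t|) hδ
    have h2 : Real.log (expLoss M μ) ≤ Real.log (expLoss M lamStar) :=
      Real.log_le_log (hpos μ) hμ
    rw [Rlog]; linarith
  rcases eq_or_lt_of_le (abs_nonneg (r t)) with hz | hz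
  · -- |r t| = 0
    obtain ⟨d, hd⟩ := hne
    have hR : Rlog M lamStar (lam t) ≤ 0 := by
      have := hkey d hd; rw [← hz, zero_mul] at this; exact this
    calc Rlog M lamStar (lam t) / Sdist M lamStar (lam t) ≤ 0 :=
          div_nonpos_of_nonpos_of_nonneg hR hS.le
      _ ≤ |r t| := abs_nonneg _
  · rw [div_le_iff₀ hS]
    have hle : Rlog M lamStar (lam t) / |r t| ≤ sInf s := by
      refine le_csInf hne fun d hd => ?_
      rw [div_le_iff₀ hz]
      calc Rlog M lamStar (lam t) ≤ |r t| * d := hkey d hd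
        _ = d * |r t| := mul_comm _ _
    rw [div_le_iff₀ hz] at hle
    rw [hSdef]
    calc Rlog M lamStar (lam t) ≤ sInf s * |r t| := hle
      _ = |r t| * sInf s := mul_comm _ _
end

section
/- In any round t of AdaBoost for which R_{t−1} and S_{t−1} are strictly positive, one has 2·(R_{t−1} − R_t)/R_{t−1} ≥ (S_t − S_{t−1})/S_{t−1}; that is, twice the relative drop in the logarithmic suboptimality dominates the relative growth of the ℓ₁-distance to the set of combinations achieving the target loss. -/
section AuxLemmas
open Real


/-- artanh-type bound: `½ log((1+x)/(1−x)) ≤ x/(1−x²)` for `0 ≤ x < 1`. -/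
lemma artanh_le (x : ℝ) (h0 : 0 ≤ x) (h1 : x < 1) :
    (1/2) * Real.log ((1+x)/(1-x)) ≤ x / (1 - x^2) := by
  have hx1 : (0:ℝ) < 1 - x := by linarith
  have hx2 : (0:ℝ) < 1 + x := by linarith
  have hq : (0:ℝ) < (1+x)/(1-x) := by positivity
  set y := (1/2) * Real.log ((1+x)/(1-x)) with hy
  have hsq : (0:ℝ) < 1 - x^2 := by nlinarith
  set a := Real.sqrt (1+x) with ha
  set b := Real.sqrt (1-x) with hb
  have hapos : 0 < a := Real.sqrt_pos.mpr hx2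
  have hbpos : 0 < b := Real.sqrt_pos.mpr hx1
  have ha2 : a^2 = 1 + x := Real.sq_sqrt hx2.le
  have hb2 : b^2 = 1 - x := Real.sq_sqrt hx1.le
  have hab : a * b = Real.sqrt (1 - x^2) := by
    rw [ha, hb, ← Real.sqrt_mul hx2.le]; ring_nf
  have hey : Real.exp y = a / b := by
    rw [hy, show (1+x)/(1-x) = (a/b)^2 by rw [div_pow, ha2, hb2],
      Real.log_pow]
    push_cast
    rw [show (1:ℝ)/2 * (2 * Real.log (a/b)) = Real.log (a/b) by ring,
      Real.exp_log (by positivity)]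
  have hsinh : Real.sinh y = x / Real.sqrt (1 - x^2) := by
    rw [Real.sinh_eq, Real.exp_neg, hey, ← hab]
    rw [inv_div]
    field_simp
    linear_combination ha2 - hb2
  have hy0 : 0 ≤ y := by
    rw [hy]
    have : (1:ℝ) ≤ (1+x)/(1-x) := by rw [le_div_iff₀ hx1]; linarith
    have := Real.log_nonneg this
    linarith
  have hle : y ≤ Real.sinh y := by
    rcases eq_or_lt_of_le hy0 with h | h
    · simp [← h]
    · exact (Real.self_lt_sinh_iff.mpr h).le
  have hs1 : Real.sqrt (1 - x^2) ≤ 1 := by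
    nlinarith [Real.sq_sqrt hsq.le, Real.sqrt_nonneg (1-x^2)]
  have hspos : 0 < Real.sqrt (1 - x^2) := Real.sqrt_pos.mpr hsq
  have h2 : (1 - x^2) ≤ Real.sqrt (1 - x^2) := by
    nlinarith [Real.sq_sqrt hsq.le, hs1, hspos]
  calc y ≤ Real.sinh y := hle
    _ = x / Real.sqrt (1 - x^2) := hsinh
    _ ≤ x / (1 - x^2) := div_le_div_of_nonneg_left h0 hsq h2



noncomputable def Fada : ℝ → ℝ := fun x =>
  -2 * Real.log (1-x) - 2 * Real.log (1+x) - x * Real.log (1+x) + x * Real.log (1-x)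

lemma Fada_hasDeriv (x : ℝ) (h1 : -1 < x) (h2 : x < 1) :
    HasDerivAt Fada
      (2/(1-x) - 2/(1+x) - (Real.log (1+x) + x/(1+x)) + (Real.log (1-x) - x/(1-x))) x := by
  have hx1 : (1:ℝ) - x ≠ 0 := by intro h; nlinarith [h]
  have hx2 : (1:ℝ) + x ≠ 0 := by intro h; nlinarith [h]
  have hm : HasDerivAt (fun y : ℝ => 1 - y) (-1) x := by
    simpa using (hasDerivAt_id x).const_sub 1
  have hp : HasDerivAt (fun y : ℝ => 1 + y) 1 x := by
    simpa using (hasDerivAt_id x).const_add 1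
  have hlm : HasDerivAt (fun y : ℝ => Real.log (1 - y)) ((1-x)⁻¹ * (-1)) x :=
    (Real.hasDerivAt_log hx1).comp x hm
  have hlp : HasDerivAt (fun y : ℝ => Real.log (1 + y)) ((1+x)⁻¹ * 1) x :=
    (Real.hasDerivAt_log hx2).comp x hp
  have t1 : HasDerivAt (fun y : ℝ => -2 * Real.log (1 - y)) (-2 * ((1-x)⁻¹ * (-1))) x :=
    hlm.const_mul (-2)
  have t2 : HasDerivAt (fun y : ℝ => -2 * Real.log (1 + y)) (-2 * ((1+x)⁻¹ * 1)) x :=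
    hlp.const_mul (-2)
  have t3 : HasDerivAt (fun y : ℝ => y * Real.log (1 + y))
      (1 * Real.log (1+x) + x * ((1+x)⁻¹ * 1)) x := (hasDerivAt_id x).mul hlp
  have t4 : HasDerivAt (fun y : ℝ => y * Real.log (1 - y))
      (1 * Real.log (1-x) + x * ((1-x)⁻¹ * (-1))) x := (hasDerivAt_id x).mul hlm
  have hd := ((t1.add t2).sub t3).add t4
  have heq : Fada = (fun y : ℝ => -2 * Real.log (1 - y) + -2 * Real.log (1 + y)
      - y * Real.log (1 + y) + y * Real.log (1 - y)) := by
    funext y; unfold Fada; ring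
  rw [heq]
  exact hd.congr_deriv (by ring)

lemma Fada_nonneg (d : ℝ) (h0 : 0 ≤ d) (h1 : d < 1) : 0 ≤ Fada d := by
  have hmono : MonotoneOn Fada (Set.Icc 0 d) := by
    apply monotoneOn_of_deriv_nonneg (convex_Icc 0 d)
    · intro x hx
      have hx1 : -1 < x := by have := hx.1; linarith
      have hx2 : x < 1 := lt_of_le_of_lt hx.2 h1
      exact (Fada_hasDeriv x hx1 hx2).continuousAt.continuousWithinAt
    · intro x hx
      rw [interior_Icc] at hx
      have hx1 : -1 < x := by have := hx.1; linarith
      have hx2 : x < 1 := lt_trans hx.2 h1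
      exact (Fada_hasDeriv x hx1 hx2).differentiableAt.differentiableWithinAt
    · intro x hx
      rw [interior_Icc] at hx
      have hx1 : (0:ℝ) < x := hx.1
      have hx2 : x < 1 := lt_trans hx.2 h1
      rw [(Fada_hasDeriv x (by linarith) hx2).deriv]
      have key := artanh_le x hx1.le hx2
      have hlog : Real.log ((1+x)/(1-x)) = Real.log (1+x) - Real.log (1-x) :=
        Real.log_div (by linarith) (by linarith)
      rw [hlog] at key
      have hsq : (0:ℝ) < 1 - x^2 := by nlinarith
      have ne1 : (1:ℝ) - x ≠ 0 := by intro h; nlinarith [h]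
      have ne2 : (1:ℝ) + x ≠ 0 := by intro h; nlinarith [h]
      have hrat : 2/(1-x) - 2/(1+x) - x/(1+x) - x/(1-x) = 2*(x/(1-x^2)) := by
        have ne3 : (1:ℝ) - x^2 ≠ 0 := by intro h; nlinarith [h]
        field_simp
        ring
      have h2 : Real.log (1+x) - Real.log (1-x) ≤ 2*(x/(1-x^2)) := by linarith
      linarith [hrat, h2]
  have h00 : Fada 0 = 0 := by unfold Fada; simp
  have := hmono (Set.left_mem_Icc.mpr h0) (Set.right_mem_Icc.mpr h0) h0
  linarith [this, h00]

/-- Key scalar inequality: `x·artanh x ≤ −log(1−x²)` for `0 ≤ x < 1`. -/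
lemma key_ineq (x : ℝ) (h0 : 0 ≤ x) (h1 : x < 1) :
    x * ((1/2) * Real.log ((1+x)/(1-x))) ≤ -Real.log (1 - x^2) := by
  have hF := Fada_nonneg x h0 h1
  unfold Fada at hF
  have hlog : Real.log ((1+x)/(1-x)) = Real.log (1+x) - Real.log (1-x) :=
    Real.log_div (by linarith) (by linarith)
  have hmul : Real.log (1 - x^2) = Real.log (1-x) + Real.log (1+x) := by
    rw [show (1:ℝ) - x^2 = (1-x)*(1+x) by ring]
    exact Real.log_mul (by intro h; nlinarith [h]) (by intro h; nlinarith [h])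
  rw [hlog, hmul]
  linarith


lemma expLoss_sum_pos {m N : ℕ} (hm : 0 < m) (M : Matrix (Fin m) (Fin N) ℝ)
    (v : Fin N → ℝ) : 0 < ∑ i, Real.exp (-(M.mulVec v i)) := by
  haveI : Nonempty (Fin m) := Fin.pos_iff_nonempty.mp hm
  exact Finset.sum_pos (fun i _ => Real.exp_pos _) Finset.univ_nonempty



variable {m N : ℕ}

lemma expLoss_pos (hm : 0 < m) (M : Matrix (Fin m) (Fin N) ℝ) (v : Fin N → ℝ) :
    0 < expLoss M v := by
  unfold expLoss
  have h1 : (0:ℝ) < 1 / (m:ℝ) := by positivity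
  exact mul_pos h1 (expLoss_sum_pos hm M v)

lemma wt_nonneg (M : Matrix (Fin m) (Fin N) ℝ) (v : Fin N → ℝ) (i : Fin m) :
    0 ≤ wt M v i :=
  div_nonneg (Real.exp_pos _).le (Finset.sum_nonneg fun i' _ => (Real.exp_pos _).le)

lemma wt_sum_one (hm : 0 < m) (M : Matrix (Fin m) (Fin N) ℝ) (v : Fin N → ℝ) :
    ∑ i, wt M v i = 1 := by
  unfold wt
  rw [← Finset.sum_div]
  exact div_self (ne_of_gt (expLoss_sum_pos hm M v))

lemma l1_nonneg (v : Fin N → ℝ) : 0 ≤ l1 v :=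
  Finset.sum_nonneg fun j _ => abs_nonneg _

/-- Jensen / gradient bound: `log L(λ) − log L(μ) ≤ ∑ wᵢ (M(μ−λ))ᵢ`-type bound. -/
lemma log_loss_diff_le (hm : 0 < m) (M : Matrix (Fin m) (Fin N) ℝ) (lam mu : Fin N → ℝ) :
    Real.log (expLoss M lam) - Real.log (expLoss M mu) ≤
      ∑ i, wt M lam i * (M.mulVec (mu - lam) i) := by
  haveI : Nonempty (Fin m) := Fin.pos_iff_nonempty.mp hm
  have hT : 0 < ∑ i', Real.exp (-(M.mulVec lam i')) := expLoss_sum_pos hm M lam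
  have hL : 0 < expLoss M lam := expLoss_pos hm M lam
  have hLmu : 0 < expLoss M mu := expLoss_pos hm M mu
  set x : Fin m → ℝ := fun i => M.mulVec lam i - M.mulVec mu i with hx
  have jensen : Real.exp (∑ i, wt M lam i * x i) ≤ ∑ i, wt M lam i * Real.exp (x i) := by
    have := convexOn_exp.map_sum_le (t := Finset.univ) (w := wt M lam) (p := x)
      (fun i _ => wt_nonneg M lam i) (wt_sum_one hm M lam) (fun i _ => Set.mem_univ _)
    simpa [smul_eq_mul] using this
  have hsum : ∑ i, wt M lam i * Real.exp (x i) = expLoss M mu / expLoss M lam := by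
    have h1 : ∀ i, wt M lam i * Real.exp (x i)
        = Real.exp (-(M.mulVec mu i)) / (∑ i', Real.exp (-(M.mulVec lam i'))) := by
      intro i
      unfold wt
      rw [div_mul_eq_mul_div, ← Real.exp_add]
      congr 2
      simp only [hx]
      ring
    rw [Finset.sum_congr rfl (fun i _ => h1 i), ← Finset.sum_div]
    unfold expLoss
    rw [mul_div_mul_left _ _ (by positivity : (1:ℝ)/(m:ℝ) ≠ 0)]
  rw [hsum] at jensen
  have hlog : ∑ i, wt M lam i * x i ≤ Real.log (expLoss M mu / expLoss M lam) :=
    (Real.le_log_iff_exp_le (by positivity)).mpr jensen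
  rw [Real.log_div (ne_of_gt hLmu) (ne_of_gt hL)] at hlog
  have hswap : ∑ i, wt M lam i * (M.mulVec (mu - lam) i) = -∑ i, wt M lam i * x i := by
    rw [← Finset.sum_neg_distrib]
    apply Finset.sum_congr rfl
    intro i _
    have : M.mulVec (mu - lam) i = M.mulVec mu i - M.mulVec lam i := by
      simp [Matrix.mulVec, dotProduct, mul_sub, Finset.sum_sub_distrib, Pi.sub_apply]
    rw [this, hx]; ring
  rw [hswap]
  linarith


end AuxLemmas

/-- In any round `t` of AdaBoost with `R_{t−1} > 0` and `S_{t−1} > 0`,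
`2·(R_{t−1} − R_t)/R_{t−1} ≥ (S_t − S_{t−1})/S_{t−1}`.
(Round `t` is the step from `lam t` to `lam (t+1)`.) -/
theorem adaboost_relative_drop_dominates {m N : ℕ} (hm : 0 < m)
    (M : Matrix (Fin m) (Fin N) ℝ) (hM : ∀ i j, |M i j| ≤ 1)
    (lam : ℕ → Fin N → ℝ) (j : ℕ → Fin N) (r : ℕ → ℝ)
    (hAda : IsAdaBoost M lam j r)
    (hdrop : ∀ t : ℕ,
      expLoss M (lam (t + 1)) ≤ expLoss M (lam t) * Real.sqrt (1 - r t ^ 2))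
    (lamStar : Fin N → ℝ) (t : ℕ)
    (hR : 0 < Rlog M lamStar (lam t)) (hS : 0 < Sdist M lamStar (lam t)) :
    (Sdist M lamStar (lam (t + 1)) - Sdist M lamStar (lam t)) / Sdist M lamStar (lam t) ≤
      2 * (Rlog M lamStar (lam t) - Rlog M lamStar (lam (t + 1))) / Rlog M lamStar (lam t) := by
  obtain ⟨h00, hstep⟩ := hAda
  obtain ⟨hmax, hrdef, hlam⟩ := hstep t
  have hL0 : 0 < expLoss M (lam t) := expLoss_pos hm M _
  have hL1 : 0 < expLoss M (lam (t+1)) := expLoss_pos hm M _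
  have hLs : 0 < expLoss M lamStar := expLoss_pos hm M _
  -- edge is strictly below 1
  have hsq : 0 < 1 - r t ^ 2 := by
    have h := hdrop t
    have h2 : 0 < Real.sqrt (1 - r t ^ 2) := by
      by_contra hc
      push_neg at hc
      have h3 : Real.sqrt (1 - r t ^ 2) = 0 := le_antisymm hc (Real.sqrt_nonneg _)
      rw [h3, mul_zero] at h
      linarith
    exact Real.sqrt_pos.mp h2
  have habs : |r t| < 1 := by nlinarith [sq_abs (r t), abs_nonneg (r t)]
  set δ := |r t| with hδ
  have hδ0 : 0 ≤ δ := abs_nonneg _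
  have hδmax : ∀ j' : Fin N, |∑ i, wt M (lam t) i * M i j'| ≤ δ := by
    intro j'
    rw [hδ, hrdef]
    exact hmax j'
  -- the gradient bound
  have hgrad : ∀ mu : Fin N → ℝ,
      Real.log (expLoss M (lam t)) - Real.log (expLoss M mu) ≤ δ * l1 (mu - lam t) := by
    intro mu
    have h := log_loss_diff_le hm M (lam t) mu
    have hswap : ∑ i, wt M (lam t) i * (M.mulVec (mu - lam t) i)
        = ∑ j', (∑ i, wt M (lam t) i * M i j') * (mu - lam t) j' := by
      simp_rw [Matrix.mulVec, dotProduct, Finset.mul_sum]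
      rw [Finset.sum_comm]
      apply Finset.sum_congr rfl
      intro j' _
      rw [Finset.sum_mul]
      apply Finset.sum_congr rfl
      intro i _
      ring
    have hbound : ∑ j', (∑ i, wt M (lam t) i * M i j') * (mu - lam t) j'
        ≤ δ * l1 (mu - lam t) := by
      rw [show l1 (mu - lam t) = ∑ j', |(mu - lam t) j'| from rfl, Finset.mul_sum]
      apply Finset.sum_le_sum
      intro j' _
      calc (∑ i, wt M (lam t) i * M i j') * (mu - lam t) j'
          ≤ |(∑ i, wt M (lam t) i * M i j') * (mu - lam t) j'| := le_abs_self _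
        _ = |∑ i, wt M (lam t) i * M i j'| * |(mu - lam t) j'| := abs_mul _ _
        _ ≤ δ * |(mu - lam t) j'| :=
            mul_le_mul_of_nonneg_right (hδmax j') (abs_nonneg _)
    calc Real.log (expLoss M (lam t)) - Real.log (expLoss M mu)
        ≤ ∑ i, wt M (lam t) i * (M.mulVec (mu - lam t) i) := h
      _ = ∑ j', (∑ i, wt M (lam t) i * M i j') * (mu - lam t) j' := hswap
      _ ≤ δ * l1 (mu - lam t) := hbound
  -- positivity of the edge
  have hδpos : 0 < δ := by
    rcases eq_or_lt_of_le hδ0 with h | h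
    · exfalso
      have hg := hgrad lamStar
      rw [← h, zero_mul] at hg
      have : Rlog M lamStar (lam t) ≤ 0 := by
        unfold Rlog
        linarith
      linarith
    · exact h
  -- the feasible sets
  have hne : ∃ d, d ∈ {d : ℝ | ∃ μ : Fin N → ℝ,
      expLoss M μ ≤ expLoss M lamStar ∧ d = l1 (μ - lam t)} :=
    ⟨l1 (lamStar - lam t), lamStar, le_refl _, rfl⟩
  have hbdd1 : BddBelow {d : ℝ | ∃ μ : Fin N → ℝ,
      expLoss M μ ≤ expLoss M lamStar ∧ d = l1 (μ - lam (t+1))} := by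
    refine ⟨0, ?_⟩
    rintro d ⟨μ, _, rfl⟩
    exact l1_nonneg _
  -- R₀ ≤ δ S₀
  have hRS : Rlog M lamStar (lam t) ≤ δ * Sdist M lamStar (lam t) := by
    have h1 : Rlog M lamStar (lam t) / δ ≤ Sdist M lamStar (lam t) := by
      apply le_csInf hne
      rintro d ⟨μ, hμ, rfl⟩
      rw [div_le_iff₀ hδpos]
      have h2 : Real.log (expLoss M μ) ≤ Real.log (expLoss M lamStar) :=
        Real.log_le_log (expLoss_pos hm M μ) hμ
      have h3 := hgrad μ
      unfold Rlog
      linarith [h3]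
    have := (div_le_iff₀ hδpos).mp h1
    linarith
  -- the step size
  set α := (1/2 : ℝ) * Real.log ((1 + r t) / (1 - r t)) with hαdef
  have hr1 : -1 < r t := (abs_lt.mp habs).1
  have hr2 : r t < 1 := (abs_lt.mp habs).2
  have hαabs : |α| = (1/2) * Real.log ((1 + δ) / (1 - δ)) := by
    rcases abs_cases (r t) with ⟨h1, h2⟩ | ⟨h1, h2⟩
    · have hq1 : (1:ℝ) ≤ (1 + r t) / (1 - r t) := by
        rw [le_div_iff₀ (by linarith)]
        linarith
      have hα0 : 0 ≤ α := mul_nonneg (by norm_num) (Real.log_nonneg hq1)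
      rw [abs_of_nonneg hα0, hδ, h1]
    · have hq1 : (0:ℝ) < (1 + r t) / (1 - r t) := div_pos (by linarith) (by linarith)
      have hq2 : (1 + r t) / (1 - r t) ≤ 1 := by
        rw [div_le_one (by linarith)]
        linarith
      have hα0 : α ≤ 0 := mul_nonpos_of_nonneg_of_nonpos (by norm_num)
        (Real.log_nonpos hq1.le hq2)
      rw [abs_of_nonpos hα0, hδ, h1, hαdef]
      rw [show -((1/2 : ℝ) * Real.log ((1 + r t) / (1 - r t)))
          = (1/2 : ℝ) * (- Real.log ((1 + r t) / (1 - r t))) by ring]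
      rw [← Real.log_inv, inv_div]
      congr 1
      ring
  -- S₁ ≤ S₀ + |α|
  have hSstep : Sdist M lamStar (lam (t+1)) ≤ Sdist M lamStar (lam t) + |α| := by
    have hkey : ∀ d ∈ {d : ℝ | ∃ μ : Fin N → ℝ,
        expLoss M μ ≤ expLoss M lamStar ∧ d = l1 (μ - lam t)},
        Sdist M lamStar (lam (t+1)) ≤ d + |α| := by
      rintro d ⟨μ, hμ, rfl⟩
      have h1 : Sdist M lamStar (lam (t+1)) ≤ l1 (μ - lam (t+1)) :=
        csInf_le hbdd1 ⟨μ, hμ, rfl⟩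
      have hsingle : ∑ j' : Fin N, |(Pi.single (j t) α : Fin N → ℝ) j'| = |α| := by
        have h2 : ∀ j' : Fin N, |(Pi.single (j t) α : Fin N → ℝ) j'|
            = if j' = j t then |α| else 0 := by
          intro j'
          by_cases h : j' = j t
          · subst h; simp
          · rw [if_neg h, Pi.single_eq_of_ne h, abs_zero]
        rw [Finset.sum_congr rfl (fun j' _ => h2 j'), Finset.sum_ite_eq' Finset.univ (j t)]
        simp
      have h2 : l1 (μ - lam (t+1)) ≤ l1 (μ - lam t) + |α| := by
        rw [hlam]
        have h3 : ∀ j' : Fin N, |(μ - (lam t + (Pi.single (j t) α : Fin N → ℝ))) j'|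
            ≤ |(μ - lam t) j'| + |(Pi.single (j t) α : Fin N → ℝ) j'| := by
          intro j'
          simp only [Pi.sub_apply, Pi.add_apply]
          rw [show μ j' - (lam t j' + (Pi.single (j t) α : Fin N → ℝ) j')
              = (μ j' - lam t j') - (Pi.single (j t) α : Fin N → ℝ) j' by ring]
          exact abs_sub _ _
        calc l1 (μ - (lam t + Pi.single (j t) α))
            = ∑ j', |(μ - (lam t + (Pi.single (j t) α : Fin N → ℝ))) j'| := by
              unfold l1; rfl
          _ ≤ ∑ j', (|(μ - lam t) j'| + |(Pi.single (j t) α : Fin N → ℝ) j'|) :=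
              Finset.sum_le_sum (fun j' _ => h3 j')
          _ = l1 (μ - lam t) + ∑ j', |(Pi.single (j t) α : Fin N → ℝ) j'| := by
              rw [Finset.sum_add_distrib]; rfl
          _ = l1 (μ - lam t) + |α| := by rw [hsingle]
      linarith
    have h4 : Sdist M lamStar (lam (t+1)) - |α| ≤ Sdist M lamStar (lam t) :=
      le_csInf hne (fun d hd => by linarith [hkey d hd])
    linarith
  -- R₀ − R₁ ≥ −½ log(1−r²)
  have hRdrop : -(1/2) * Real.log (1 - r t ^ 2)
      ≤ Rlog M lamStar (lam t) - Rlog M lamStar (lam (t+1)) := by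
    have h := hdrop t
    have hlog1 : Real.log (expLoss M (lam (t+1)))
        ≤ Real.log (expLoss M (lam t)) + (1/2) * Real.log (1 - r t ^ 2) := by
      have h2 : Real.log (expLoss M (lam (t+1)))
          ≤ Real.log (expLoss M (lam t) * Real.sqrt (1 - r t ^ 2)) :=
        Real.log_le_log hL1 h
      rw [Real.log_mul (ne_of_gt hL0) (ne_of_gt (Real.sqrt_pos.mpr hsq)),
        Real.log_sqrt hsq.le] at h2
      linarith
    unfold Rlog
    linarith
  -- the key scalar inequality
  have hkeyineq : δ * |α| ≤ -Real.log (1 - r t ^ 2) := by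
    have h := key_ineq δ hδ0 habs
    rw [hαabs]
    rw [show (1:ℝ) - δ ^ 2 = 1 - r t ^ 2 by rw [hδ, sq_abs]] at h
    exact h
  -- conclude
  rw [div_le_div_iff₀ hS hR]
  have hα0 : 0 ≤ |α| := abs_nonneg _
  calc (Sdist M lamStar (lam (t+1)) - Sdist M lamStar (lam t)) * Rlog M lamStar (lam t)
      ≤ |α| * Rlog M lamStar (lam t) :=
        mul_le_mul_of_nonneg_right (by linarith) hR.le
    _ ≤ |α| * (δ * Sdist M lamStar (lam t)) := mul_le_mul_of_nonneg_left hRS hα0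
    _ = (δ * |α|) * Sdist M lamStar (lam t) := by ring
    _ ≤ (-Real.log (1 - r t ^ 2)) * Sdist M lamStar (lam t) :=
        mul_le_mul_of_nonneg_right hkeyineq hS.le
    _ ≤ (2 * (Rlog M lamStar (lam t) - Rlog M lamStar (lam (t+1))))
          * Sdist M lamStar (lam t) :=
        mul_le_mul_of_nonneg_right (by linarith) hS.le
    _ = 2 * (Rlog M lamStar (lam t) - Rlog M lamStar (lam (t+1)))
          * Sdist M lamStar (lam t) := by ring
end

section
/- Let ν > 0 and let M be the 4×2 matrix with rows (−1, +1), (+1, −1), (−1+ν, +1), (+1, −1+ν). Then for every ε > 0: (a) there exists λ ∈ ℝ² with L(λ) ≤ 1/2 + ε; and (b) every λ ∈ ℝ² with L(λ) ≤ 1/2 + ε satisfies ‖λ‖₁ ≥ 2·ln(1/(2ε))/ν. -/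
/-- The 4×2 feature matrix with rows `(−1,+1)`, `(+1,−1)`, `(−1+ν,+1)`, `(+1,−1+ν)`. -/
noncomputable def Mnu (ν : ℝ) : Matrix (Fin 4) (Fin 2) ℝ :=
  !![-1, 1; 1, -1; -1 + ν, 1; 1, -1 + ν]

lemma expLoss_Mnu (ν : ℝ) (lam : Fin 2 → ℝ) :
    expLoss (Mnu ν) lam = (1/4) * (Real.exp (lam 0 - lam 1) + Real.exp (lam 1 - lam 0)
      + Real.exp ((1 - ν) * lam 0 - lam 1) + Real.exp (-lam 0 + (1 - ν) * lam 1)) := by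
  simp [expLoss, Mnu, Matrix.mulVec, dotProduct, Fin.sum_univ_four, Fin.sum_univ_two]
  ring_nf

lemma two_exp_le (x y : ℝ) : 2 * Real.exp ((x + y) / 2) ≤ Real.exp x + Real.exp y := by
  have hx : Real.exp (x/2) * Real.exp (x/2) = Real.exp x := by
    rw [← Real.exp_add]; ring_nf
  have hy : Real.exp (y/2) * Real.exp (y/2) = Real.exp y := by
    rw [← Real.exp_add]; ring_nf
  have hxy : Real.exp (x/2) * Real.exp (y/2) = Real.exp ((x+y)/2) := by
    rw [← Real.exp_add]; ring_nf
  nlinarith [sq_nonneg (Real.exp (x/2) - Real.exp (y/2))]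

/-- For the matrix `Mnu ν` with `ν > 0` and any `ε > 0`, a loss of `1/2 + ε`
is achievable, but every combination achieving it has ℓ₁-norm at least `2·ln(1/(2ε))/ν`. -/
theorem norm_lower_bound_nonintegral (ν : ℝ) (hν : 0 < ν) (ε : ℝ) (hε : 0 < ε) :
    (∃ lam : Fin 2 → ℝ, expLoss (Mnu ν) lam ≤ 1 / 2 + ε) ∧
    ∀ lam : Fin 2 → ℝ, expLoss (Mnu ν) lam ≤ 1 / 2 + ε →
      2 * Real.log (1 / (2 * ε)) / ν ≤ l1 lam := by
  have h2ε : (0:ℝ) < 2 * ε := by linarith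
  constructor
  · refine ⟨fun _ => Real.log (1 / (2 * ε)) / ν, ?_⟩
    rw [expLoss_Mnu]
    set t := Real.log (1 / (2 * ε)) / ν with ht
    have h1 : t - t = 0 := by ring
    have h2 : (1 - ν) * t - t = -(ν * t) := by ring
    have h3 : -t + (1 - ν) * t = -(ν * t) := by ring
    have hνt : ν * t = Real.log (1 / (2 * ε)) := by
      rw [ht]; field_simp [hν.ne']
    have he : Real.exp (-(ν * t)) = 2 * ε := by
      rw [hνt, Real.exp_neg, Real.exp_log (by positivity)]
      field_simp
    rw [h1, h2, h3, he, Real.exp_zero]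
    ring_nf
    linarith
  · intro lam h
    rw [expLoss_Mnu] at h
    set a := lam 0; set b := lam 1
    have hg1 : 2 ≤ Real.exp (a - b) + Real.exp (b - a) := by
      have h := two_exp_le (a - b) (b - a)
      rw [show (a - b + (b - a)) / 2 = 0 by ring, Real.exp_zero] at h
      linarith
    have hg2 : 2 * Real.exp (-(ν * (a + b)) / 2) ≤
        Real.exp ((1 - ν) * a - b) + Real.exp (-a + (1 - ν) * b) := by
      have := two_exp_le ((1 - ν) * a - b) (-a + (1 - ν) * b)
      rw [show ((1 - ν) * a - b + (-a + (1 - ν) * b)) / 2 = -(ν * (a + b)) / 2 by ring] at this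
      exact this
    have hkey : Real.exp (-(ν * (a + b)) / 2) ≤ 2 * ε := by linarith
    have hlog : -(ν * (a + b)) / 2 ≤ Real.log (2 * ε) := by
      have h : Real.exp (-(ν * (a + b)) / 2) ≤ Real.exp (Real.log (2 * ε)) := by
        rw [Real.exp_log h2ε]; exact hkey
      exact Real.exp_le_exp.mp h
    have hln : Real.log (1 / (2 * ε)) = -Real.log (2 * ε) := by
      rw [one_div, Real.log_inv]
    rw [hln, l1, Fin.sum_univ_two]
    have ha := le_abs_self a
    have hb := le_abs_self b
    rw [div_le_iff₀ hν]
    nlinarith [hν]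
end

section
/- Suppose Z ⊆ {1,…,m}, γ > 0, and η† ∈ ℝ^N with ‖η†‖₁ = 1 satisfy (Mη†)_i ≥ γ for all i ∈ Z and (Mη†)_i = 0 for all i ∉ Z. Then in each round t of AdaBoost the edge satisfies δ_t ≥ γ·(∑_{i∈Z} exp(−(Mλ^{t−1})_i))/(∑_{i=1}^m exp(−(Mλ^{t−1})_i)). -/
/-- If a unit-ℓ₁-norm `η†` has margin at least `γ > 0` on every example of
`Z` and zero margin off `Z`, then in each round `t` of AdaBoost the edge satisfies
`δ_t ≥ γ·(∑_{i∈Z} e^{−(Mλ^{t−1})ᵢ})/(∑_{i=1}^m e^{−(Mλ^{t−1})ᵢ})`. -/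
theorem adaboost_edge_from_zero_loss_set {m N : ℕ} (hm : 0 < m)
    (M : Matrix (Fin m) (Fin N) ℝ) (hM : ∀ i j, |M i j| ≤ 1)
    (Z : Finset (Fin m)) (γ : ℝ) (hγ : 0 < γ)
    (ηd : Fin N → ℝ) (hηd : l1 ηd = 1)
    (hZ : ∀ i ∈ Z, γ ≤ M.mulVec ηd i)
    (hFc : ∀ i ∉ Z, M.mulVec ηd i = 0)
    (lam : ℕ → Fin N → ℝ) (j : ℕ → Fin N) (r : ℕ → ℝ)
    (hAda : IsAdaBoost M lam j r) (t : ℕ) :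
    γ * (∑ i ∈ Z, Real.exp (-(M.mulVec (lam t) i))) /
        (∑ i, Real.exp (-(M.mulVec (lam t) i))) ≤ |r t| := by
  obtain ⟨h0, hstep⟩ := hAda
  obtain ⟨hmax, hr, -⟩ := hstep t
  set L := lam t with hL
  set c : Fin N → ℝ := fun j' => ∑ i, wt M L i * M i j' with hc
  haveI : Nonempty (Fin m) := ⟨⟨0, hm⟩⟩
  have hSpos : 0 < ∑ i', Real.exp (-(M.mulVec L i')) :=
    Finset.sum_pos (fun i _ => Real.exp_pos _) Finset.univ_nonempty
  have hwt : ∀ i, 0 ≤ wt M L i := fun i =>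
    div_nonneg (Real.exp_pos _).le hSpos.le
  have key1 : γ * (∑ i ∈ Z, Real.exp (-(M.mulVec L i))) / (∑ i, Real.exp (-(M.mulVec L i)))
      = ∑ i ∈ Z, γ * wt M L i := by
    simp only [wt]
    rw [mul_div_assoc, Finset.sum_div, Finset.mul_sum]
  have key2 : ∑ i ∈ Z, γ * wt M L i ≤ ∑ i, wt M L i * M.mulVec ηd i := by
    have : ∑ i, wt M L i * M.mulVec ηd i = ∑ i ∈ Z, wt M L i * M.mulVec ηd i :=
      (Finset.sum_subset (Finset.subset_univ Z)
        (fun i _ hi => by rw [hFc i hi, mul_zero])).symm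
    rw [this]
    refine Finset.sum_le_sum fun i hi => ?_
    rw [mul_comm]
    exact mul_le_mul_of_nonneg_left (hZ i hi) (hwt i)
  have key3 : ∑ i, wt M L i * M.mulVec ηd i = ∑ j', ηd j' * c j' := by
    simp only [Matrix.mulVec, dotProduct, Finset.mul_sum, hc]
    rw [Finset.sum_comm]
    exact Finset.sum_congr rfl fun j' _ => Finset.sum_congr rfl fun i _ => by ring
  have key4 : ∑ j', ηd j' * c j' ≤ |r t| := by
    calc ∑ j', ηd j' * c j' ≤ |∑ j', ηd j' * c j'| := le_abs_self _
      _ ≤ ∑ j', |ηd j' * c j'| := Finset.abs_sum_le_sum_abs _ _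
      _ ≤ ∑ j', |ηd j'| * |c (j t)| := by
          refine Finset.sum_le_sum fun j' _ => ?_
          rw [abs_mul]
          exact mul_le_mul_of_nonneg_left (hmax j') (abs_nonneg _)
      _ = |r t| := by
          rw [← Finset.sum_mul, show (∑ i, |ηd i|) = 1 from hηd, one_mul, hr]
  linarith [key1, key2, key3, key4]
end

section
/- Let F ⊆ {1,…,m} be nonempty with M_F (the submatrix of M consisting of the rows in F) not identically zero, let K = inf_{η∈ℝ^N} ∑_{i∈F} exp(−(Mη)_i), and suppose: K is attained by some η* ∈ ℝ^N, and there is μ_max < ∞ such that every η with ∑_{i∈F} exp(−(Mη)_i) ≤ m has (Mη)_i ≤ μ_max for all i ∈ F. Let λ_min² be the smallest positive eigenvalue of M_Fᵀ·M_F and set C₀ = 2·λ_min²·N^{−1}·m^{−1}·e^{−μ_max}. Then for every λ ∈ ℝ^N with K ≤ ∑_{i∈F} exp(−(Mλ)_i) ≤ m, there is a coordinate direction j with |∑_{i∈F} exp(−(Mλ)_i)·M_{ij}| / (∑_{i∈F} exp(−(Mλ)_i)) ≥ √(C₀·(∑_{i∈F} exp(−(Mλ)_i) − K)/(∑_{i∈F}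 exp(−(Mλ)_i))). -/
section Aux

lemma expB_aux {x : ℝ} (hx : 0 ≤ x) : Real.exp x * (1 - x) + x^2/2 ≤ 1 := by
  set f : ℝ → ℝ := fun t => 1 - Real.exp t * (1 - t) - t^2/2 with hf
  have hderiv : ∀ t : ℝ, HasDerivAt f (t * Real.exp t - t) t := by
    intro t
    have h1 : HasDerivAt (fun t : ℝ => Real.exp t * (1 - t))
        (Real.exp t * (1 - t) + Real.exp t * (-1)) t :=
      (Real.hasDerivAt_exp t).mul ((hasDerivAt_id t).const_sub 1)
    have h2 : HasDerivAt (fun t : ℝ => t^2/2) t t := by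
      simpa using ((hasDerivAt_pow 2 t).div_const 2)
    have h3 := ((hasDerivAt_const t (1:ℝ)).sub h1).sub h2
    rw [show t * Real.exp t - t = 0 - (Real.exp t * (1 - t) + Real.exp t * (-1)) - t by ring]
    exact h3
  have hmono : MonotoneOn f (Set.Ici 0) := by
    apply monotoneOn_of_deriv_nonneg (convex_Ici 0)
      (Continuous.continuousOn (by fun_prop))
      (fun t _ => (hderiv t).differentiableAt.differentiableWithinAt)
    intro t ht
    rw [interior_Ici] at ht
    rw [(hderiv t).deriv]
    have h1 : 1 ≤ Real.exp t := Real.one_le_exp (le_of_lt ht)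
    have h2 : (0:ℝ) < t := ht
    nlinarith [mul_le_mul_of_nonneg_left h1 h2.le]
  have := hmono (Set.mem_Ici.mpr le_rfl) (Set.mem_Ici.mpr hx) hx
  simp only [hf, Real.exp_zero] at this
  nlinarith [this]

lemma exp_taylor_lower {c a x : ℝ} (h1 : c ≤ Real.exp (-a)) (h2 : c ≤ Real.exp (-(a+x))) :
    Real.exp (-a) - Real.exp (-a) * x + c/2 * x^2 ≤ Real.exp (-(a+x)) := by
  have hsplit : Real.exp (-(a+x)) = Real.exp (-a) * Real.exp (-x) := by
    rw [← Real.exp_add]; ring_nf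
  rcases le_or_gt x 0 with hx | hx
  · have hq := Real.quadratic_le_exp_of_nonneg (neg_nonneg.mpr hx)
    have hE := Real.exp_pos (-a)
    nlinarith [mul_le_mul_of_nonneg_left hq hE.le, sq_nonneg x,
      mul_nonneg (sub_nonneg.mpr h1) (sq_nonneg x)]
  · have hb := expB_aux hx.le
    have hF := Real.exp_pos (-(a+x))
    have hFE : Real.exp (-(a+x)) * Real.exp x = Real.exp (-a) := by
      rw [← Real.exp_add]; ring_nf
    nlinarith [mul_le_mul_of_nonneg_left hb hF.le, sq_nonneg x,
      mul_nonneg (sub_nonneg.mpr h2) (sq_nonneg x)]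

open Finset Matrix in
lemma exists_proj {m N : ℕ} (B : Matrix (Fin m) (Fin N) ℝ) (lmin2 : ℝ)
    (hlmin : ∀ μ : ℝ, 0 < μ →
      (∃ v : Fin N → ℝ, v ≠ 0 ∧ (B.transpose * B).mulVec v = μ • v) → lmin2 ≤ μ)
    (w : Fin N → ℝ) :
    ∃ d : Fin N → ℝ, B.mulVec d = B.mulVec w ∧
      lmin2 * ∑ j, d j ^ 2 ≤ ∑ i, (B.mulVec d i) ^ 2 := by
  classical
  set A : Matrix (Fin N) (Fin N) ℝ := B.transpose * B with hAdef
  have hA : A.IsHermitian := by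
    have := Matrix.isHermitian_conjTranspose_mul_self B
    rwa [Matrix.conjTranspose_eq_transpose_of_trivial] at this
  have hPSD : A.PosSemidef := by
    have := Matrix.posSemidef_conjTranspose_mul_self B
    rwa [Matrix.conjTranspose_eq_transpose_of_trivial] at this
  set b := hA.eigenvectorBasis with hb
  set μ := hA.eigenvalues with hμ
  set W : EuclideanSpace ℝ (Fin N) := WithLp.toLp 2 w with hW
  set c : Fin N → ℝ := fun k => b.repr W k with hc
  set S : Finset (Fin N) := Finset.univ.filter (fun k => μ k ≠ 0) with hS
  set d : EuclideanSpace ℝ (Fin N) := ∑ k ∈ S, c k • b k with hd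
  have hWsum : W = ∑ k : Fin N, c k • b k := (b.sum_repr W).symm
  have hcoe : ∀ (s : Finset (Fin N)) (f : Fin N → EuclideanSpace ℝ (Fin N)),
      WithLp.ofLp (∑ k ∈ s, f k)
        = ∑ k ∈ s, WithLp.ofLp (f k) := by
    intro s f
    exact map_sum (WithLp.linearEquiv 2 ℝ (Fin N → ℝ)) f s
  have hAd : ∀ (s : Finset (Fin N)), A.mulVec (⇑(∑ k ∈ s, c k • b k)) =
      ⇑(∑ k ∈ s, (c k * μ k) • b k) := by
    intro s
    rw [hcoe, hcoe]
    rw [show A.mulVec (∑ k ∈ s, WithLp.ofLp (c k • b k))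
        = ∑ k ∈ s, A.mulVec (WithLp.ofLp (c k • b k)) from
      map_sum A.mulVecLin _ s]
    refine Finset.sum_congr rfl fun k _ => ?_
    have h1 : WithLp.ofLp (c k • b k) = c k • ⇑(b k) := rfl
    have h2 : WithLp.ofLp ((c k * μ k) • b k) = (c k * μ k) • ⇑(b k) := rfl
    rw [h1, h2, Matrix.mulVec_smul, hA.mulVec_eigenvectorBasis, smul_smul]
  have hker : A.mulVec (⇑W - ⇑d) = 0 := by
    have h1 : (⇑W - ⇑d : Fin N → ℝ) = ⇑(∑ k ∈ Sᶜ, c k • b k) := by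
      have h2 : W - d = ∑ k ∈ Sᶜ, c k • b k := by
        rw [hWsum, hd, ← Finset.sum_compl_add_sum S (fun k => c k • b k)]
        abel
      calc (⇑W - ⇑d : Fin N → ℝ) = ⇑(W - d) := rfl
        _ = _ := by rw [h2]
    rw [h1, hAd]
    have : ∑ k ∈ Sᶜ, (c k * μ k) • b k = 0 := by
      apply Finset.sum_eq_zero
      intro k hk
      have : μ k = 0 := by
        by_contra hne
        exact (Finset.mem_compl.mp hk) (by simp [hS, hne])
      simp [this]
    rw [this]
    rfl
  have hquad : ∀ v : Fin N → ℝ, v ⬝ᵥ (A.mulVec v) = ∑ i, (B.mulVec v i) ^ 2 := by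
    intro v
    rw [hAdef, ← Matrix.mulVec_mulVec, Matrix.dotProduct_mulVec v B.transpose,
      Matrix.vecMul_transpose]
    simp [dotProduct, pow_two]
  have hBker : B.mulVec (⇑W - ⇑d) = 0 := by
    have hdot : ∑ i, (B.mulVec (⇑W - ⇑d) i) ^ 2 = 0 := by
      rw [← hquad, hker, dotProduct_zero]
    funext i
    have := (Finset.sum_eq_zero_iff_of_nonneg (fun i _ => sq_nonneg (B.mulVec (⇑W - ⇑d) i))).mp
      hdot i (Finset.mem_univ i)
    simpa using pow_eq_zero_iff (n := 2) (by norm_num) |>.mp this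
  refine ⟨⇑d, ?_, ?_⟩
  · have h0 : B.mulVec ⇑W - B.mulVec ⇑d = 0 := by rw [← Matrix.mulVec_sub]; exact hBker
    exact (sub_eq_zero.mp h0).symm
  · rw [← hquad]
    have hAdd : A.mulVec ⇑d = ⇑(∑ k ∈ S, (c k * μ k) • b k) := hAd S
    have hinner : (⇑d : Fin N → ℝ) ⬝ᵥ (A.mulVec ⇑d) = ∑ k ∈ S, c k * (c k * μ k) := by
      have h3 := b.orthonormal.inner_sum c (fun k => c k * μ k) S
      simp only [starRingEnd_apply, star_trivial] at h3
      rw [hAdd, ← h3, hd]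
      simp [PiLp.inner_apply, RCLike.inner_apply, dotProduct, starRingEnd_apply,
        hcoe, mul_comm]
    have hnorm : ∑ j, (⇑d j) ^ 2 = ∑ k ∈ S, c k * c k := by
      have h3 := b.orthonormal.inner_sum c c S
      simp only [starRingEnd_apply, star_trivial] at h3
      rw [← h3, hd]
      rw [PiLp.inner_apply]
      simp [PiLp.inner_apply, RCLike.inner_apply, starRingEnd_apply, pow_two]
    rw [hinner, hnorm, Finset.mul_sum]
    apply Finset.sum_le_sum
    intro k hk
    have hkne : μ k ≠ 0 := by simpa [hS] using hk
    have hkpos : 0 < μ k := lt_of_le_of_ne (hPSD.eigenvalues_nonneg k) (Ne.symm hkne)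
    have hev : lmin2 ≤ μ k := by
      refine hlmin (μ k) hkpos ⟨⇑(b k), ?_, hA.mulVec_eigenvectorBasis k⟩
      intro h
      exact b.orthonormal.ne_zero k (by ext j; exact congrFun h j)
    nlinarith [sq_nonneg (c k)]

end Aux

/-- The total (unnormalized) exponential loss `∑_{i∈F} exp(−(Mη)ᵢ)` on a set `F` of rows. -/
noncomputable def lossOn {m N : ℕ} (M : Matrix (Fin m) (Fin N) ℝ)
    (F : Finset (Fin m)) (η : Fin N → ℝ) : ℝ :=
  ∑ i ∈ F, Real.exp (-(M.mulVec η i))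

/-- The matrix `M` with all rows outside `F` replaced by zero (so `(restrictRows M F).transpose *
restrictRows M F = M_Fᵀ M_F`). -/
def restrictRows {m N : ℕ} (M : Matrix (Fin m) (Fin N) ℝ) (F : Finset (Fin m)) :
    Matrix (Fin m) (Fin N) ℝ := fun i j => if i ∈ F then M i j else 0

set_option maxHeartbeats 1000000 in
/-- under the stated hypotheses (optimal loss `K` on `F` attained, margins
on `F` of bounded-loss vectors bounded by `μ_max`, `λ_min²` the smallest positive
eigenvalue of `M_Fᵀ M_F`, `C₀ = 2λ_min²·N⁻¹·m⁻¹·e^{−μ_max}`), for every `λ` with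
`K ≤ ℓ_F(λ) ≤ m` some coordinate direction has edge at least
`√(C₀·(ℓ_F(λ) − K)/ℓ_F(λ))` on `F`. -/
theorem second_order_edge_bound {m N : ℕ}
    (M : Matrix (Fin m) (Fin N) ℝ) (hM : ∀ i j, |M i j| ≤ 1)
    (F : Finset (Fin m)) (hF : F.Nonempty)
    (hMF : ∃ i ∈ F, ∃ j : Fin N, M i j ≠ 0)
    (K : ℝ) (hK : K = ⨅ η : Fin N → ℝ, lossOn M F η)
    (ηstar : Fin N → ℝ) (hηstar : lossOn M F ηstar = K)
    (μmax : ℝ)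
    (hμ : ∀ η : Fin N → ℝ, lossOn M F η ≤ (m : ℝ) → ∀ i ∈ F, M.mulVec η i ≤ μmax)
    (lmin2 : ℝ) (hlpos : 0 < lmin2)
    (hleig : ∃ v : Fin N → ℝ, v ≠ 0 ∧
      ((restrictRows M F).transpose * restrictRows M F).mulVec v = lmin2 • v)
    (hlmin : ∀ μ : ℝ, 0 < μ →
      (∃ v : Fin N → ℝ, v ≠ 0 ∧
        ((restrictRows M F).transpose * restrictRows M F).mulVec v = μ • v) → lmin2 ≤ μ)
    (C₀ : ℝ) (hC₀ : C₀ = 2 * lmin2 * (N : ℝ)⁻¹ * (m : ℝ)⁻¹ * Real.exp (-μmax))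
    (lam : Fin N → ℝ) (hlo : K ≤ lossOn M F lam) (hhi : lossOn M F lam ≤ (m : ℝ)) :
    ∃ j : Fin N,
      Real.sqrt (C₀ * (lossOn M F lam - K) / lossOn M F lam) ≤
        |∑ i ∈ F, Real.exp (-(M.mulVec lam i)) * M i j| / lossOn M F lam := by
  classical
  obtain ⟨i1, hi1F, j1, hj1⟩ := hMF
  set ℓ := lossOn M F lam with hℓdef
  have hl_pos : 0 < ℓ := Finset.sum_pos (fun i _ => Real.exp_pos _) hF
  have hm_pos : (0:ℝ) < (m:ℝ) := lt_of_lt_of_le hl_pos hhi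
  have hN_pos : (0:ℝ) < (N:ℝ) := by exact_mod_cast j1.pos
  set g : Fin N → ℝ := fun j => ∑ i ∈ F, Real.exp (-(M.mulVec lam i)) * M i j with hg
  obtain ⟨j₀, -, hj₀⟩ := Finset.exists_max_image Finset.univ (fun j => |g j|)
    ⟨j1, Finset.mem_univ _⟩
  refine ⟨j₀, ?_⟩
  set G := |g j₀| with hG
  have hG0 : 0 ≤ G := abs_nonneg _
  set B := restrictRows M F with hB
  obtain ⟨d, hd1, hd2⟩ := exists_proj B lmin2 hlmin (ηstar - lam)
  have hrow : ∀ (v : Fin N → ℝ), ∀ i ∈ F, B.mulVec v i = M.mulVec v i := by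
    intro v i hi
    simp [Matrix.mulVec, dotProduct, hB, restrictRows, hi]
  have hadd : ∀ i, M.mulVec (lam + d) i = M.mulVec lam i + M.mulVec d i := by
    intro i; rw [Matrix.mulVec_add]; rfl
  have hMd : ∀ i ∈ F, M.mulVec (lam + d) i = M.mulVec ηstar i := by
    intro i hi
    have h0 := congrFun hd1 i
    rw [hrow d i hi, hrow _ i hi] at h0
    have h1 : M.mulVec (ηstar - lam) i = M.mulVec ηstar i - M.mulVec lam i := by
      rw [Matrix.mulVec_sub]; rfl
    rw [hadd i, h0, h1]; ring
  have hKd : lossOn M F (lam + d) = K := by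
    rw [← hηstar]; unfold lossOn
    exact Finset.sum_congr rfl fun i hi => by rw [hMd i hi]
  have hKm : lossOn M F (lam + d) ≤ (m:ℝ) := by rw [hKd]; exact le_trans hlo hhi
  have hmar1 := hμ lam hhi
  have hmar2 := hμ (lam + d) hKm
  set cc := Real.exp (-μmax) with hcc
  have hcc_pos : 0 < cc := Real.exp_pos _
  have hpt : ∀ i ∈ F,
      Real.exp (-(M.mulVec lam i)) - Real.exp (-(M.mulVec lam i)) * M.mulVec d i
        + cc/2 * (M.mulVec d i)^2 ≤ Real.exp (-(M.mulVec (lam+d) i)) := by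
    intro i hi
    have h1 : cc ≤ Real.exp (-(M.mulVec lam i)) :=
      Real.exp_le_exp.mpr (neg_le_neg (hmar1 i hi))
    have h2 : cc ≤ Real.exp (-(M.mulVec lam i + M.mulVec d i)) := by
      rw [← hadd i]; exact Real.exp_le_exp.mpr (neg_le_neg (hmar2 i hi))
    have h3 := exp_taylor_lower h1 h2
    rw [← hadd i] at h3
    exact h3
  set T := ∑ i ∈ F, Real.exp (-(M.mulVec lam i)) * M.mulVec d i with hT
  set QF := ∑ i ∈ F, (M.mulVec d i)^2 with hQF
  have hsum : ℓ - T + cc/2 * QF ≤ K := by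
    have h4 := Finset.sum_le_sum hpt
    have h5 : ∑ i ∈ F, (Real.exp (-(M.mulVec lam i)) - Real.exp (-(M.mulVec lam i)) * M.mulVec d i
        + cc/2 * (M.mulVec d i)^2) = ℓ - T + cc/2 * QF := by
      rw [hℓdef, hT, hQF]; unfold lossOn
      rw [Finset.mul_sum, ← Finset.sum_sub_distrib, ← Finset.sum_add_distrib]
    rw [h5] at h4
    calc ℓ - T + cc/2 * QF ≤ ∑ i ∈ F, Real.exp (-(M.mulVec (lam+d) i)) := h4
      _ = K := hKd
  have hTg : T = ∑ j, g j * d j := by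
    rw [hT, hg]
    simp only [Matrix.mulVec, dotProduct, Finset.mul_sum, Finset.sum_mul]
    rw [Finset.sum_comm]
    exact Finset.sum_congr rfl fun j _ => Finset.sum_congr rfl fun i _ => by ring
  set P := ∑ j, |d j| with hP
  have hTb : T ≤ G * P := by
    calc T ≤ |T| := le_abs_self T
      _ ≤ ∑ j, |g j * d j| := by rw [hTg]; exact Finset.abs_sum_le_sum_abs _ _
      _ ≤ ∑ j, G * |d j| := Finset.sum_le_sum fun j _ => by
          rw [abs_mul]
          exact mul_le_mul_of_nonneg_right (hj₀ j (Finset.mem_univ j)) (abs_nonneg _)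
      _ = G * P := by rw [hP, Finset.mul_sum]
  have hP2 : P^2 ≤ (N:ℝ) * ∑ j, d j ^2 := by
    have := sq_sum_le_card_mul_sum_sq (s := Finset.univ) (f := fun j => |d j|)
    simpa [sq_abs, Finset.card_univ] using this
  have hQFB : ∑ i, (B.mulVec d i)^2 = QF := by
    rw [hQF]
    rw [← Finset.sum_subset (Finset.subset_univ F) (fun i _ hi => by
      simp [Matrix.mulVec, dotProduct, hB, restrictRows, hi])]
    exact Finset.sum_congr rfl fun i hi => by rw [hrow d i hi]
  have hQd : lmin2 * ∑ j, d j^2 ≤ QF := hQFB ▸ hd2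
  have hQdnn : (0:ℝ) ≤ ∑ j, d j^2 := Finset.sum_nonneg fun j _ => sq_nonneg _
  have h6 : ℓ - K ≤ G * P - cc/2 * (lmin2 * ∑ j, d j^2) := by nlinarith [hsum, hTb, hQd, hcc_pos]
  have hmain : 2 * cc * lmin2 * (N:ℝ) * (ℓ - K) ≤ (N:ℝ)^2 * G^2 := by
    nlinarith [mul_le_mul_of_nonneg_left h6 (by positivity : (0:ℝ) ≤ 2*cc*lmin2*(N:ℝ)),
      mul_le_mul_of_nonneg_left hP2 (by positivity : (0:ℝ) ≤ cc*lmin2*(cc*lmin2)),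
      sq_nonneg ((N:ℝ)*G - cc*lmin2*P)]
  have h7 : 2*cc*lmin2*(ℓ - K) ≤ (N:ℝ)*G^2 := by
    have h8 : (N:ℝ) * (2*cc*lmin2*(ℓ-K)) ≤ (N:ℝ) * ((N:ℝ)*G^2) := by linarith [hmain]
    exact le_of_mul_le_mul_left h8 hN_pos
  have hfin : C₀ * (ℓ - K) / ℓ ≤ (G / ℓ)^2 := by
    rw [hC₀, div_pow, div_le_div_iff₀ hl_pos (by positivity)]
    have h8 := mul_le_mul_of_nonneg_right h7
      (by positivity : (0:ℝ) ≤ ℓ^2 * (N:ℝ)⁻¹ * (m:ℝ)⁻¹)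
    have h9 : (N:ℝ)*G^2*(ℓ^2 * (N:ℝ)⁻¹ * (m:ℝ)⁻¹) = G^2*(ℓ^2 * (m:ℝ)⁻¹) := by
      field_simp
    have h10 : ℓ^2 * (m:ℝ)⁻¹ ≤ ℓ := by
      rw [← div_eq_mul_inv, div_le_iff₀ hm_pos]
      nlinarith [hl_pos]
    have h11 : G^2*(ℓ^2 * (m:ℝ)⁻¹) ≤ G^2 * ℓ :=
      mul_le_mul_of_nonneg_left h10 (sq_nonneg G)
    rw [h9] at h8
    calc 2 * lmin2 * (N:ℝ)⁻¹ * (m:ℝ)⁻¹ * cc * (ℓ - K) * ℓ^2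
        = 2*cc*lmin2*(ℓ-K) * (ℓ^2 * (N:ℝ)⁻¹ * (m:ℝ)⁻¹) := by ring
      _ ≤ G^2*(ℓ^2 * (m:ℝ)⁻¹) := h8
      _ ≤ G^2 * ℓ := h11
  calc Real.sqrt (C₀ * (ℓ - K)/ℓ) ≤ Real.sqrt ((G/ℓ)^2) := Real.sqrt_le_sqrt hfin
    _ = G/ℓ := Real.sqrt_sq (by positivity)
end
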